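/- arXiv:2401.06029 — 9 statements merged into one kernel-verified Lean document; each statement's English description precedes it below -/
import Mathlib

section
/- For all integers r ≥ 1 and Δ ≥ 2, there exist an r-graph G with maximum degree Δ and an edge-coloring of G into color classes E_1, …, E_n such that |E_i| ≥ rΔ − 1 for every i and G has no full rainbow matching with respect to E_1, …, E_n. -/
set_option linter.unusedSectionVars false

open Finset

/-- The degree of a vertex `v` in the multi-hypergraph with edge family `E`
(edges indexed by `ι`, parallel edges counted as distinct). -/
def mhDeg {V ι : Type} [Fintype ι] [DecidableEq V] (E : ι → Finset V) (v : V) : ℕ :=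
  (Finset.univ.filter fun a => v ∈ E a).card

/-- The size of the color class of color `i` under the edge-coloring `c`. -/
def classSize {ι κ : Type} [Fintype ι] [DecidableEq κ] (c : ι → κ) (i : κ) : ℕ :=
  (Finset.univ.filter fun a => c a = i).card

/-- An edge-coloring is proper if each color class is a matching. -/
def properColoring {V ι κ : Type} (E : ι → Finset V) (c : ι → κ) : Prop :=
  ∀ a b : ι, a ≠ b → c a = c b → Disjoint (E a) (E b)

/-- A full rainbow matching with respect to the coloring `c`: a set of pairwise disjoint
edges containing exactly one edge from each color class. -/
def hasFullRainbowMatching {V ι κ : Type} (E : ι → Finset V) (c : ι → κ) : Prop :=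
  ∃ f : κ → ι, (∀ i, c (f i) = i) ∧ ∀ i j : κ, i ≠ j → Disjoint (E (f i)) (E (f j))

lemma card_le_classSize {ι κ D : Type} [Fintype ι] [Fintype D] [DecidableEq ι] [DecidableEq κ]
    (c : ι → κ) (i : κ) (g : D → ι) (hg : Function.Injective g) (hc : ∀ x, c (g x) = i) :
    Fintype.card D ≤ classSize c i := by
  rw [classSize, ← Finset.card_univ, ← Finset.card_image_of_injective Finset.univ hg]
  apply Finset.card_le_card
  intro x hx
  rw [Finset.mem_image] at hx
  obtain ⟨y, -, rfl⟩ := hx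
  simp [hc]

lemma filter_card_equiv {α β : Type} [Fintype α] [Fintype β] (e : α ≃ β)
    (P : β → Prop) [DecidablePred P] :
    (Finset.univ.filter fun a => P (e a)).card = (Finset.univ.filter P).card := by
  refine Finset.card_bij (fun a _ => e a) ?_ ?_ ?_
  · intro a ha
    simp only [Finset.mem_filter, Finset.mem_univ, true_and] at ha ⊢
    exact ha
  · intro a₁ _ a₂ _ h
    exact e.injective h
  · intro bb hb
    simp only [Finset.mem_filter, Finset.mem_univ, true_and] at hb
    exact ⟨e.symm bb, by simp [hb], by simp⟩

section transport
variable {V ι κ : Type} [Fintype V] [Fintype ι] [Fintype κ]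
  [DecidableEq V] [DecidableEq ι] [DecidableEq κ]
  (E : ι → Finset V) (c : ι → κ)

noncomputable def tE (eι : ι ≃ Fin (Fintype.card ι)) (eV : V ≃ Fin (Fintype.card V)) :
    Fin (Fintype.card ι) → Finset (Fin (Fintype.card V)) :=
  fun m => (E (eι.symm m)).map eV.toEmbedding

noncomputable def tc (eι : ι ≃ Fin (Fintype.card ι)) (eκ : κ ≃ Fin (Fintype.card κ)) :
    Fin (Fintype.card ι) → Fin (Fintype.card κ) :=
  fun m => eκ (c (eι.symm m))

lemma tE_card (eι) (eV) (hE : ∀ e, (E e).card = rr) (m) : ((tE E eι eV) m).card = rr := by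
  rw [tE, Finset.card_map]; exact hE _

lemma tE_mhDeg (eι) (eV) (w) : mhDeg (tE E eι eV) w = mhDeg E (eV.symm w) := by
  rw [mhDeg, mhDeg]
  have : ∀ m : Fin (Fintype.card ι), (w ∈ (tE E eι eV) m) = ((eV.symm w) ∈ E (eι.symm m)) := by
    intro m
    rw [tE, eq_iff_iff, Finset.mem_map_equiv]
  simp only [this]
  exact filter_card_equiv eι.symm (fun x => (eV.symm w) ∈ E x)

lemma tc_classSize (eι) (eκ) (i) : classSize (tc c eι eκ) i = classSize c (eκ.symm i) := by
  rw [classSize, classSize]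
  have : ∀ m : Fin (Fintype.card ι), ((tc c eι eκ) m = i) = (c (eι.symm m) = eκ.symm i) := by
    intro m
    rw [tc, eq_iff_iff, Equiv.apply_eq_iff_eq_symm_apply]
  simp only [this]
  exact filter_card_equiv eι.symm (fun x => c x = eκ.symm i)

lemma t_noFRM (eι) (eV) (eκ) (h : ¬ hasFullRainbowMatching E c) :
    ¬ hasFullRainbowMatching (tE E eι eV) (tc c eι eκ) := by
  rintro ⟨f, hcf, hdf⟩
  refine h ⟨fun i => eι.symm (f (eκ i)), ?_, ?_⟩
  · intro i
    have := hcf (eκ i)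
    rw [tc] at this
    exact eκ.injective this
  · intro i j hij
    have := hdf (eκ i) (eκ j) (fun hh => hij (eκ.injective hh))
    rw [tE, tE] at this
    exact (Finset.disjoint_map _).mp this

end transport
namespace FRMC

variable (a b : ℕ)

/-- chain length -/
abbrev LL : ℕ := a*b + a + b

lemma LL_pos (h : 0 < a) : 0 < LL a b :=
  Nat.lt_of_lt_of_le h (le_trans (Nat.le_add_left a (a*b)) (Nat.le_add_right _ b))

abbrev VT := (Fin (a+1) × Fin (a+1)) ⊕ (Fin 2 × Fin (LL a b) × Fin (a+1) × Fin (a+1))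

abbrev IT := (Fin 2 × Fin (a+1)) ⊕
  (Fin 2 × Fin (LL a b) × Fin (a+1) × Fin (b+1)) ⊕ (Fin 2 × Fin (LL a b) × Fin (a+1))

abbrev KT := Fin 2 × Fin (LL a b + 1)

def E0 : IT a b → Finset (VT a b)
  | .inl (l, p) => Finset.univ.image (fun k => Sum.inl (if l = 0 then (p, k) else (k, p)))
  | .inr (.inl (l, i, k, _c)) => Finset.univ.image (fun j => Sum.inr (l, i, j, k))
  | .inr (.inr (l, i, j)) => Finset.univ.image (fun k => Sum.inr (l, i, j, k))

def c0 : IT a b → KT a b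
  | .inl (l, p) => (l, if p = 0 then Fin.last _ else 0)
  | .inr (.inl (l, i, _k, _c)) => (l, i.castSucc)
  | .inr (.inr (l, i, j)) => (l, if j = 0 then Fin.last _ else i.succ)

lemma card_E0 (e : IT a b) : (E0 a b e).card = a + 1 := by
  rcases e with ⟨l, p⟩ | ⟨⟨l, i, k, c⟩ | ⟨l, i, j⟩⟩
  · rw [E0, Finset.card_image_of_injective _ ?_, Finset.card_univ, Fintype.card_fin]
    intro x y h
    by_cases hl : l = 0 <;> simp [hl, Prod.ext_iff] at h <;> tauto
  · rw [E0, Finset.card_image_of_injective _ ?_, Finset.card_univ, Fintype.card_fin]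
    intro x y h
    simp [Prod.ext_iff] at h; tauto
  · rw [E0, Finset.card_image_of_injective _ ?_, Finset.card_univ, Fintype.card_fin]
    intro x y h
    simp [Prod.ext_iff] at h; tauto
lemma mem_E0_E1 (l : Fin 2) (p : Fin (a+1)) (v : VT a b) :
    v ∈ E0 a b (.inl (l, p)) ↔ ∃ k, v = Sum.inl (if l = 0 then (p, k) else (k, p)) := by
  simp [E0, eq_comm]

lemma mem_E0_E2 (l : Fin 2) (i : Fin (LL a b)) (k : Fin (a+1)) (c : Fin (b+1)) (v : VT a b) :
    v ∈ E0 a b (.inr (.inl (l, i, k, c))) ↔ ∃ j, v = Sum.inr (l, i, j, k) := by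
  simp [E0, eq_comm]

lemma mem_E0_E3 (l : Fin 2) (i : Fin (LL a b)) (j : Fin (a+1)) (v : VT a b) :
    v ∈ E0 a b (.inr (.inr (l, i, j))) ↔ ∃ k, v = Sum.inr (l, i, j, k) := by
  simp [E0, eq_comm]

lemma degY (j k : Fin (a+1)) :
    mhDeg (E0 a b) (Sum.inl (j, k)) = 2 := by
  have : (Finset.univ.filter fun e => (Sum.inl (j,k) : VT a b) ∈ E0 a b e)
      = {Sum.inl ((0 : Fin 2), j), Sum.inl ((1 : Fin 2), k)} := by
    ext e
    simp only [Finset.mem_filter, Finset.mem_univ, true_and, Finset.mem_insert,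
      Finset.mem_singleton]
    constructor
    · intro h
      rcases e with ⟨l, p⟩ | ⟨⟨l, i, k', c⟩ | ⟨l, i, j'⟩⟩
      · rw [mem_E0_E1] at h
        obtain ⟨x, hx⟩ := h
        by_cases hl : l = 0
        · rw [if_pos hl] at hx
          rw [Sum.inl.injEq, Prod.mk.injEq] at hx
          left; rw [hl, hx.1]
        · rw [if_neg hl] at hx
          rw [Sum.inl.injEq, Prod.mk.injEq] at hx
          right
          have hl1 : l = 1 := by omega
          rw [hl1, hx.2]
      · rw [mem_E0_E2] at h; obtain ⟨x, hx⟩ := h; simp at hx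
      · rw [mem_E0_E3] at h; obtain ⟨x, hx⟩ := h; simp at hx
    · rintro (h | h) <;> rw [h]
      · rw [mem_E0_E1]; exact ⟨k, by norm_num⟩
      · rw [mem_E0_E1]
        refine ⟨j, ?_⟩
        rw [if_neg (by decide)]
  rw [mhDeg, this]
  rw [Finset.card_insert_of_notMem (by simp), Finset.card_singleton]

lemma degZ (l : Fin 2) (i : Fin (LL a b)) (j k : Fin (a+1)) :
    mhDeg (E0 a b) (Sum.inr (l, i, j, k)) = b + 2 := by
  have : (Finset.univ.filter fun e => (Sum.inr (l,i,j,k) : VT a b) ∈ E0 a b e)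
      = insert (Sum.inr (Sum.inr (l, i, j)))
          ((Finset.univ : Finset (Fin (b+1))).image
            fun c => (Sum.inr (Sum.inl (l, i, k, c)) : IT a b)) := by
    ext e
    simp only [Finset.mem_filter, Finset.mem_univ, true_and, Finset.mem_insert,
      Finset.mem_image]
    constructor
    · intro h
      rcases e with ⟨l', p⟩ | ⟨⟨l', i', k', c⟩ | ⟨l', i', j'⟩⟩
      · rw [mem_E0_E1] at h
        obtain ⟨x, hx⟩ := h
        by_cases hl : l' = 0 <;> [rw [if_pos hl] at hx; rw [if_neg hl] at hx] <;> simp at hx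
      · rw [mem_E0_E2] at h
        obtain ⟨x, hx⟩ := h
        rw [Sum.inr.injEq, Prod.mk.injEq, Prod.mk.injEq, Prod.mk.injEq] at hx
        right
        exact ⟨c, by rw [hx.1, hx.2.1, hx.2.2.2]⟩
      · rw [mem_E0_E3] at h
        obtain ⟨x, hx⟩ := h
        rw [Sum.inr.injEq, Prod.mk.injEq, Prod.mk.injEq, Prod.mk.injEq] at hx
        left
        rw [hx.1, hx.2.1, hx.2.2.1]
    · rintro (h | ⟨c', h⟩)
      · rw [h, mem_E0_E3]; exact ⟨k, rfl⟩
      · rw [← h, mem_E0_E2]; exact ⟨j, rfl⟩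
  rw [mhDeg, this]
  rw [Finset.card_insert_of_notMem (by simp), Finset.card_image_of_injective _ ?_,
    Finset.card_univ, Fintype.card_fin]
  intro x y h
  simp [Prod.ext_iff] at h; tauto
lemma classSize_ge (i : KT a b) : a*b + 2*a + b + 1 ≤ classSize (c0 a b) i := by
  obtain ⟨l, t⟩ := i
  by_cases ht : t = Fin.last (LL a b)
  · subst ht
    have h := card_le_classSize (c0 a b) (l, Fin.last (LL a b))
      (fun x : Fin 1 ⊕ Fin (LL a b) ⊕ Fin a => match x with
        | .inl _ => .inl (l, 0)
        | .inr (.inl i') => .inr (.inr (l, i', 0))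
        | .inr (.inr p) => .inr (.inr (l, ⟨LL a b - 1,
            Nat.sub_lt (LL_pos a b p.pos) one_pos⟩, p.succ)))
      ?_ ?_
    · refine le_trans (le_of_eq ?_) h
      simp only [Fintype.card_sum, Fintype.card_fin]
      ring
    · intro x y hxy
      rcases x with x | x | x <;> rcases y with y | y | y
      · rw [Subsingleton.elim x y]
      · exact absurd hxy (by simp)
      · exact absurd hxy (by simp)
      · exact absurd hxy (by simp)
      · simp only [Sum.inr.injEq, Prod.mk.injEq, true_and] at hxy
        rw [hxy.1]
      · simp only [Sum.inr.injEq, Sum.inl.injEq, Prod.mk.injEq, true_and] at hxy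
        exact absurd hxy.2 (by simp [Fin.ext_iff])
      · exact absurd hxy (by simp)
      · simp only [Sum.inr.injEq, Sum.inl.injEq, Prod.mk.injEq, true_and] at hxy
        exact absurd hxy.2 (by simp [Fin.ext_iff])
      · simp only [Sum.inr.injEq, Prod.mk.injEq, true_and] at hxy
        rw [show x = y from Fin.succ_injective _ hxy]
    · rintro (x | x | x)
      · simp [c0]
      · simp [c0]
      · simp only [c0]
        rw [if_neg (Fin.succ_ne_zero x)]
        refine Prod.ext rfl (Fin.ext ?_)
        rw [Fin.val_succ]
        simp only [Fin.val_last]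
        exact Nat.succ_pred_eq_of_pos (LL_pos a b x.pos)
  · have htL : t.val < LL a b := by
      have h1 := t.isLt
      have h2 : t.val ≠ LL a b := fun hh => ht (Fin.ext (by simp [hh]))
      omega
    have hE2 : ∀ x : Fin (a+1) × Fin (b+1),
        c0 a b (.inr (.inl (l, ⟨t.val, htL⟩, x.1, x.2))) = (l, t) := by
      intro x
      simp only [c0]
      exact Prod.ext rfl (Fin.ext (by simp [Fin.castSucc, Fin.castAdd, Fin.castLE]))
    by_cases ht0 : t = 0
    · have h := card_le_classSize (c0 a b) (l, t)
        (fun x : Fin a ⊕ (Fin (a+1) × Fin (b+1)) => match x with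
          | .inl p => .inl (l, p.succ)
          | .inr (k, c) => .inr (.inl (l, ⟨t.val, htL⟩, k, c)))
        ?_ ?_
      · refine le_trans (le_of_eq ?_) h
        simp only [Fintype.card_sum, Fintype.card_prod, Fintype.card_fin]
        ring
      · intro x y hxy
        rcases x with x | ⟨xk, xc⟩ <;> rcases y with y | ⟨yk, yc⟩
        · simp only [Sum.inl.injEq, Prod.mk.injEq, true_and] at hxy
          rw [show x = y from Fin.succ_injective _ hxy]
        · exact absurd hxy (by simp)
        · exact absurd hxy (by simp)
        · simp only [Sum.inr.injEq, Sum.inl.injEq, Prod.mk.injEq, true_and] at hxy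
          rw [hxy.1, hxy.2]
      · rintro (x | ⟨xk, xc⟩)
        · simp only [c0]
          rw [if_neg (Fin.succ_ne_zero x), ht0]
        · exact hE2 (xk, xc)
    · have ht1 : 1 ≤ t.val := by
        have : t.val ≠ 0 := fun hh => ht0 (Fin.ext (by simp [hh]))
        omega
      have h := card_le_classSize (c0 a b) (l, t)
        (fun x : Fin a ⊕ (Fin (a+1) × Fin (b+1)) => match x with
          | .inl p => .inr (.inr (l, ⟨t.val - 1, by omega⟩, p.succ))
          | .inr (k, c) => .inr (.inl (l, ⟨t.val, htL⟩, k, c)))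
        ?_ ?_
      · refine le_trans (le_of_eq ?_) h
        simp only [Fintype.card_sum, Fintype.card_prod, Fintype.card_fin]
        ring
      · intro x y hxy
        rcases x with x | ⟨xk, xc⟩ <;> rcases y with y | ⟨yk, yc⟩
        · simp only [Sum.inr.injEq, Prod.mk.injEq, true_and] at hxy
          rw [show x = y from Fin.succ_injective _ hxy]
        · exact absurd hxy (by simp)
        · exact absurd hxy (by simp)
        · simp only [Sum.inr.injEq, Sum.inl.injEq, Prod.mk.injEq, true_and] at hxy
          rw [hxy.1, hxy.2]
      · rintro (x | ⟨xk, xc⟩)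
        · simp only [c0]
          rw [if_neg (Fin.succ_ne_zero x)]
          refine Prod.ext rfl (Fin.ext ?_)
          rw [Fin.val_succ]
          exact Nat.succ_pred_eq_of_pos ht1
        · exact hE2 (xk, xc)
theorem noFRM : ¬ hasFullRainbowMatching (E0 a b) (c0 a b) := by
  rintro ⟨f, hc, hd⟩
  -- E3 vs E2 conflict helper
  have conflict : ∀ (t1 t2 : Fin (LL a b + 1)) (l : Fin 2) (i : Fin (LL a b))
      (j k : Fin (a+1)) (c : Fin (b+1)), t1 ≠ t2 →
      f (l, t1) = Sum.inr (Sum.inr (l, i, j)) →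
      f (l, t2) = Sum.inr (Sum.inl (l, i, k, c)) → False := by
    intro t1 t2 l i j k c hne h1 h2
    have hdisj := hd (l, t1) (l, t2) (by simp [Prod.ext_iff, hne])
    rw [h1, h2] at hdisj
    have hv1 : (Sum.inr (l, i, j, k) : VT a b) ∈ E0 a b (.inr (.inr (l, i, j))) := by
      rw [mem_E0_E3]; exact ⟨k, rfl⟩
    have hv2 : (Sum.inr (l, i, j, k) : VT a b) ∈ E0 a b (.inr (.inl (l, i, k, c))) := by
      rw [mem_E0_E2]; exact ⟨j, rfl⟩
    exact Finset.disjoint_left.mp hdisj hv1 hv2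
  have key : ∀ l : Fin 2, ∃ t : Fin (LL a b + 1), ∃ p : Fin (a+1),
      f (l, t) = Sum.inl (l, p) := by
    intro l
    by_contra hno
    push_neg at hno
    -- every pick is E2 or E3; first, no pick is E1 at all:
    have h1 : ∀ (t : Fin (LL a b + 1)) (x : Fin 2 × Fin (a+1)), f (l, t) ≠ Sum.inl x := by
      intro t x hx
      have hct := hc (l, t)
      rw [hx] at hct
      obtain ⟨l', p⟩ := x
      simp only [c0, Prod.mk.injEq] at hct
      rw [hct.1] at hx
      exact hno t p hx
    have main : ∀ n (hn : n < LL a b), ∃ k c,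
        f (l, ⟨n, Nat.lt_succ_of_lt hn⟩) = Sum.inr (Sum.inl (l, ⟨n, hn⟩, k, c)) := by
      intro n
      induction n with
      | zero =>
        intro hn
        rcases hfe : f (l, ⟨0, Nat.lt_succ_of_lt hn⟩) with x | ⟨⟨l', i', k, c⟩ | ⟨l', i', j⟩⟩
        · exact absurd hfe (h1 _ x)
        · have hct := hc (l, ⟨0, Nat.lt_succ_of_lt hn⟩)
          rw [hfe] at hct
          simp only [c0, Prod.mk.injEq] at hct
          obtain ⟨hl, hτ⟩ := hct
          have hi' : i' = ⟨0, hn⟩ := Fin.ext (by simpa [Fin.ext_iff] using hτ)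
          rw [hl, hi']
          exact ⟨k, c, rfl⟩
        · have hct := hc (l, ⟨0, Nat.lt_succ_of_lt hn⟩)
          rw [hfe] at hct
          simp only [c0, Prod.mk.injEq] at hct
          obtain ⟨hl, hτ⟩ := hct
          by_cases hj : j = 0
          · rw [if_pos hj] at hτ
            rw [Fin.ext_iff] at hτ
            simp only [Fin.val_last] at hτ
            omega
          · rw [if_neg hj] at hτ
            rw [Fin.ext_iff] at hτ
            simp only [Fin.val_succ] at hτ
            omega
      | succ n ih =>
        intro hn
        have hn' : n < LL a b := Nat.lt_of_succ_lt hn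
        obtain ⟨k₀, c₀, hk₀⟩ := ih hn'
        rcases hfe : f (l, ⟨n+1, Nat.lt_succ_of_lt hn⟩) with x | ⟨⟨l', i', k, c⟩ | ⟨l', i', j⟩⟩
        · exact absurd hfe (h1 _ x)
        · have hct := hc (l, ⟨n+1, Nat.lt_succ_of_lt hn⟩)
          rw [hfe] at hct
          simp only [c0, Prod.mk.injEq] at hct
          obtain ⟨hl, hτ⟩ := hct
          have hi' : i' = ⟨n+1, hn⟩ := Fin.ext (by simpa [Fin.ext_iff] using hτ)
          rw [hl, hi']
          exact ⟨k, c, rfl⟩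
        · have hct := hc (l, ⟨n+1, Nat.lt_succ_of_lt hn⟩)
          rw [hfe] at hct
          simp only [c0, Prod.mk.injEq] at hct
          obtain ⟨hl, hτ⟩ := hct
          by_cases hj : j = 0
          · rw [if_pos hj] at hτ
            rw [Fin.ext_iff] at hτ
            simp only [Fin.val_last] at hτ
            omega
          · rw [if_neg hj] at hτ
            have hi' : i' = ⟨n, hn'⟩ := by
              rw [Fin.ext_iff] at hτ ⊢
              simp only [Fin.val_succ] at hτ
              simpa using hτ
            rw [hl, hi'] at hfe
            exact (conflict _ _ l ⟨n, hn'⟩ j k₀ c₀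
              (by simp [Fin.ext_iff]) hfe hk₀).elim
    -- collector class
    rcases hfe : f (l, Fin.last (LL a b)) with x | ⟨⟨l', i', k, c⟩ | ⟨l', i', j⟩⟩
    · exact absurd hfe (h1 _ x)
    · have hct := hc (l, Fin.last (LL a b))
      rw [hfe] at hct
      simp only [c0, Prod.mk.injEq] at hct
      obtain ⟨hl, hτ⟩ := hct
      rw [Fin.ext_iff] at hτ
      simp only [Fin.coe_castSucc, Fin.val_last] at hτ
      exact absurd hτ (by have := i'.isLt; omega)
    · have hct := hc (l, Fin.last (LL a b))
      rw [hfe] at hct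
      simp only [c0, Prod.mk.injEq] at hct
      obtain ⟨hl, hτ⟩ := hct
      rw [hl] at hfe
      obtain ⟨k₀, c₀, hk₀⟩ := main i'.val i'.isLt
      have hi'eta : (⟨i'.val, i'.isLt⟩ : Fin (LL a b)) = i' := Fin.ext rfl
      rw [hi'eta] at hk₀
      refine conflict _ _ l i' j k₀ c₀ ?_ hfe hk₀
      intro h
      rw [Fin.ext_iff] at h
      simp at h
      have := i'.isLt
      omega
  obtain ⟨t0, p, hp⟩ := key 0
  obtain ⟨t1, q, hq⟩ := key 1
  have hdisj := hd (0, t0) (1, t1) (by simp [Prod.ext_iff])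
  rw [hp, hq] at hdisj
  have hv1 : (Sum.inl (p, q) : VT a b) ∈ E0 a b (.inl (0, p)) := by
    rw [mem_E0_E1]
    exact ⟨q, by rw [if_pos rfl]⟩
  have hv2 : (Sum.inl (p, q) : VT a b) ∈ E0 a b (.inl (1, q)) := by
    rw [mem_E0_E1]
    refine ⟨p, ?_⟩
    rw [if_neg (by decide)]
  exact Finset.disjoint_left.mp hdisj hv1 hv2
end FRMC

/-- For all `r ≥ 1` and `Δ ≥ 2` there is an edge-colored `r`-graph with maximum degree `Δ`,
all color classes of size at least `rΔ - 1`, and no full rainbow matching. -/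
theorem stmt2 (r Δ : ℕ) (hr : 1 ≤ r) (hΔ : 2 ≤ Δ) :
    ∃ (N M n : ℕ) (E : Fin M → Finset (Fin N)) (c : Fin M → Fin n),
      (∀ a, (E a).card = r) ∧
      (∀ v, mhDeg E v ≤ Δ) ∧ (∃ v, mhDeg E v = Δ) ∧
      (∀ i : Fin n, r * Δ - 1 ≤ classSize c i) ∧
      ¬ hasFullRainbowMatching E c := by
  classical
  obtain ⟨a, rfl⟩ : ∃ a, r = a + 1 := ⟨r - 1, by omega⟩
  obtain ⟨b, rfl⟩ : ∃ b, Δ = b + 2 := ⟨Δ - 2, by omega⟩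
  refine ⟨Fintype.card (FRMC.VT a b), Fintype.card (FRMC.IT a b), Fintype.card (FRMC.KT a b),
    tE (FRMC.E0 a b) (Fintype.equivFin _) (Fintype.equivFin _),
    tc (FRMC.c0 a b) (Fintype.equivFin _) (Fintype.equivFin _), ?_, ?_, ?_, ?_, ?_⟩
  · intro m
    exact tE_card (FRMC.E0 a b) _ _ (FRMC.card_E0 a b) m
  · intro v
    rw [tE_mhDeg]
    rcases hw : (Fintype.equivFin (FRMC.VT a b)).symm v with ⟨j, k⟩ | ⟨l, i, j, k⟩
    · rw [FRMC.degY]; omega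
    · rw [FRMC.degZ]
  · rcases Nat.eq_zero_or_pos b with hb | hb
    · refine ⟨Fintype.equivFin (FRMC.VT a b) (Sum.inl (0, 0)), ?_⟩
      rw [tE_mhDeg, Equiv.symm_apply_apply, FRMC.degY]
      omega
    · have hL : 0 < FRMC.LL a b := Nat.lt_of_lt_of_le hb (Nat.le_add_left b (a*b+a))
      refine ⟨Fintype.equivFin (FRMC.VT a b) (Sum.inr (0, ⟨0, hL⟩, 0, 0)), ?_⟩
      rw [tE_mhDeg, Equiv.symm_apply_apply, FRMC.degZ]
  · intro i
    rw [tc_classSize]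
    have h1 := FRMC.classSize_ge a b ((Fintype.equivFin (FRMC.KT a b)).symm i)
    have h2 : (a+1) * (b+2) = a*b + 2*a + b + 2 := by ring
    omega
  · exact t_noFRM (FRMC.E0 a b) (FRMC.c0 a b) _ _ _ (FRMC.noFRM a b)
end

section
/- For all integers t, r, Δ with 1 ≤ t ≤ r and Δ ≥ 2, there exist a t-simple, r-partite r-graph G with maximum degree Δ and an edge-coloring of G into color classes E_1, …, E_n such that |E_i| ≥ r(Δ−1) + t − 1 for every i and G has no full rainbow matching with respect to E_1, …, E_n. -/
open Finset

namespace Stmt3C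

/-- `R = r(Δ-1)`, the per-edge conflict budget. -/
def RR (r Δ : ℕ) : ℕ := r * (Δ - 1)
/-- number of gadgets, `= r(Δ-1)+t-1` (also the common class size). -/
def ss (r t Δ : ℕ) : ℕ := RR r Δ + t - 1
/-- number of colors, `= r(Δ-1)+t`. -/
def nn (r t Δ : ℕ) : ℕ := RR r Δ + t

/-- column index within a gadget -/
abbrev CI (r Δ : ℕ) := Fin r × Fin (Δ - 1)
/-- edge index: gadget × (row or column) -/
abbrev EI (r t Δ : ℕ) := Fin (ss r t Δ) × (Fin t ⊕ CI r Δ)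
/-- vertex index: gadget × (row-vertex or free column vertex) -/
abbrev VI (r t Δ : ℕ) := Fin (ss r t Δ) × ((Fin t × Fin r) ⊕ (CI r Δ × Fin (r - t)))

/-- addition in `Fin r` by a natural number -/
def pAdd {r : ℕ} (l : Fin r) (j : ℕ) : Fin r :=
  ⟨(l.1 + j) % r, Nat.mod_lt _ l.pos⟩

/-- the edges -/
def EE (r t Δ : ℕ) : EI r t Δ → Finset (VI r t Δ)
  | (γ, Sum.inl i) => univ.image fun k : Fin r => (γ, Sum.inl (i, k))
  | (γ, Sum.inr c) =>
      (univ.image fun i : Fin t => (γ, Sum.inl (i, pAdd c.1 i.1))) ∪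
      (univ.image fun k : Fin (r - t) => (γ, Sum.inr (c, k)))

/-- the coloring (as a natural number) -/
def cN (r t Δ : ℕ) : EI r t Δ → ℕ
  | (γ, Sum.inl i) =>
      if i.1 < t - 1 then γ.1 + 1 else if γ.1 < t - 1 then t - 1 else nn r t Δ - 1
  | (γ, Sum.inr c) =>
      if γ.1 = t - 1 then (if c.1.1 + r * c.2.1 < t - 1 then 0 else t - 1) else γ.1

instance instDecMemEE (r t Δ : ℕ) (w : VI r t Δ) :
    DecidablePred (fun a : EI r t Δ => w ∈ EE r t Δ a) := fun _ => inferInstance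

instance instDecCN (r t Δ : ℕ) (x : ℕ) :
    DecidablePred (fun a : EI r t Δ => cN r t Δ a = x) := fun _ => inferInstance

section Basic

variable {r t Δ : ℕ}

lemma hRr (htr : 1 ≤ r) (hΔ : 2 ≤ Δ) : r ≤ RR r Δ := by
  have h : 1 ≤ Δ - 1 := by omega
  calc r = r * 1 := (mul_one r).symm
  _ ≤ r * (Δ - 1) := Nat.mul_le_mul_left r h

lemma mem_row {γ : Fin (ss r t Δ)} {i : Fin t} {v : VI r t Δ} :
    v ∈ EE r t Δ (γ, Sum.inl i) ↔ ∃ k : Fin r, v = (γ, Sum.inl (i, k)) := by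
  simp [EE, eq_comm]

lemma mem_col {γ : Fin (ss r t Δ)} {c : CI r Δ} {v : VI r t Δ} :
    v ∈ EE r t Δ (γ, Sum.inr c) ↔
      (∃ i : Fin t, v = (γ, Sum.inl (i, pAdd c.1 i.1))) ∨
      (∃ k : Fin (r - t), v = (γ, Sum.inr (c, k))) := by
  simp [EE, eq_comm]

lemma card_row (γ : Fin (ss r t Δ)) (i : Fin t) : (EE r t Δ (γ, Sum.inl i)).card = r := by
  have hinj : Function.Injective (fun k : Fin r => ((γ, Sum.inl (i, k)) : VI r t Δ)) := by
    intro a b h; simpa using h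
  rw [show EE r t Δ (γ, Sum.inl i) = univ.image fun k : Fin r => (γ, Sum.inl (i, k)) from rfl,
    Finset.card_image_of_injective _ hinj, card_univ, Fintype.card_fin]

lemma card_col (htr : t ≤ r) (γ : Fin (ss r t Δ)) (c : CI r Δ) :
    (EE r t Δ (γ, Sum.inr c)).card = r := by
  have h1 : Function.Injective (fun i : Fin t => ((γ, Sum.inl (i, pAdd c.1 i.1)) : VI r t Δ)) := by
    intro a b h; simp only [Prod.mk.injEq, Sum.inl.injEq] at h; exact h.2.1
  have h2 : Function.Injective (fun k : Fin (r - t) => ((γ, Sum.inr (c, k)) : VI r t Δ)) := by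
    intro a b h; simpa using h
  have hd : Disjoint (univ.image fun i : Fin t => ((γ, Sum.inl (i, pAdd c.1 i.1)) : VI r t Δ))
      (univ.image fun k : Fin (r - t) => ((γ, Sum.inr (c, k)) : VI r t Δ)) := by
    rw [Finset.disjoint_left]
    rintro v hv hv'
    simp only [mem_image, mem_univ, true_and] at hv hv'
    obtain ⟨i, rfl⟩ := hv
    obtain ⟨k, hk⟩ := hv'
    simp at hk
  rw [show EE r t Δ (γ, Sum.inr c) =
      (univ.image fun i : Fin t => (γ, Sum.inl (i, pAdd c.1 i.1))) ∪
      (univ.image fun k : Fin (r - t) => (γ, Sum.inr (c, k))) from rfl,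
    Finset.card_union_of_disjoint hd, Finset.card_image_of_injective _ h1,
    Finset.card_image_of_injective _ h2, card_univ, card_univ, Fintype.card_fin, Fintype.card_fin]
  omega

lemma mem_gadget {a : EI r t Δ} {v : VI r t Δ} (h : v ∈ EE r t Δ a) : v.1 = a.1 := by
  obtain ⟨γ, i | c⟩ := a
  · rw [mem_row] at h; obtain ⟨k, rfl⟩ := h; rfl
  · rw [mem_col] at h
    rcases h with ⟨i, rfl⟩ | ⟨k, rfl⟩ <;> rfl

end Basic


section Inter

variable {r t Δ : ℕ}

lemma pAdd_left_inj {l : Fin r} {j j' : ℕ} (hj : j < r) (hj' : j' < r)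
    (h : pAdd l j = pAdd l j') : j = j' := by
  have h1 : (l.1 + j) % r = (l.1 + j') % r := congrArg Fin.val h
  have h2 : j % r = j' % r := Nat.ModEq.add_left_cancel' l.1 h1
  rwa [Nat.mod_eq_of_lt hj, Nat.mod_eq_of_lt hj'] at h2

lemma pAdd_right_cancel {l l' : Fin r} {j : ℕ} (h : pAdd l j = pAdd l' j) : l = l' := by
  have h1 : (l.1 + j) % r = (l'.1 + j) % r := congrArg Fin.val h
  have h2 : l.1 % r = l'.1 % r := Nat.ModEq.add_right_cancel' j h1
  rw [Nat.mod_eq_of_lt l.2, Nat.mod_eq_of_lt l'.2] at h2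
  exact Fin.ext h2

def lsolve {r : ℕ} (k : Fin r) (j : ℕ) : Fin r :=
  ⟨(k.1 + (r - j)) % r, Nat.mod_lt _ k.pos⟩

lemma pAdd_lsolve (k : Fin r) {j : ℕ} (hj : j ≤ r) : pAdd (lsolve k j) j = k := by
  apply Fin.ext
  show ((k.1 + (r - j)) % r + j) % r = k.1
  rw [Nat.mod_add_mod, show k.1 + (r - j) + j = k.1 + r by omega, Nat.add_mod_right]
  exact Nat.mod_eq_of_lt k.2

/-- a row and a column of the same gadget always intersect -/
lemma row_col_not_disjoint (γ : Fin (ss r t Δ)) (i : Fin t) (c : CI r Δ) :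
    ¬ Disjoint (EE r t Δ (γ, Sum.inl i)) (EE r t Δ (γ, Sum.inr c)) := by
  intro hd
  have h1 : ((γ, Sum.inl (i, pAdd c.1 i.1)) : VI r t Δ) ∈ EE r t Δ (γ, Sum.inl i) :=
    mem_row.2 ⟨pAdd c.1 i.1, rfl⟩
  have h2 : ((γ, Sum.inl (i, pAdd c.1 i.1)) : VI r t Δ) ∈ EE r t Δ (γ, Sum.inr c) :=
    mem_col.2 (Or.inl ⟨i, rfl⟩)
  exact Finset.disjoint_left.1 hd h1 h2

lemma inter_card_le (ht : 1 ≤ t) {a b : EI r t Δ} (hab : a ≠ b) :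
    (EE r t Δ a ∩ EE r t Δ b).card ≤ t := by
  obtain ⟨γ, ia | ca⟩ := a <;> obtain ⟨δ, ib | cb⟩ := b
  · -- row ∩ row
    have : EE r t Δ (γ, Sum.inl ia) ∩ EE r t Δ (δ, Sum.inl ib) = ∅ := by
      rw [Finset.eq_empty_iff_forall_notMem]
      intro v hv
      rw [Finset.mem_inter, mem_row, mem_row] at hv
      obtain ⟨⟨k, rfl⟩, ⟨k', hk'⟩⟩ := hv
      simp only [Prod.mk.injEq, Sum.inl.injEq, Prod.mk.injEq] at hk'
      exact hab (by rw [hk'.1, hk'.2.1])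
    rw [this]; simp
  · -- row ∩ col
    have hsub : EE r t Δ (γ, Sum.inl ia) ∩ EE r t Δ (δ, Sum.inr cb) ⊆
        {(γ, Sum.inl (ia, pAdd cb.1 ia.1))} := by
      intro v hv
      rw [Finset.mem_inter, mem_row, mem_col] at hv
      obtain ⟨⟨k, rfl⟩, hv2⟩ := hv
      rcases hv2 with ⟨i', hi'⟩ | ⟨k', hk'⟩
      · simp only [Prod.mk.injEq, Sum.inl.injEq] at hi'
        rw [Finset.mem_singleton, hi'.2.1, hi'.2.2]
      · simp at hk'
    calc (EE r t Δ (γ, Sum.inl ia) ∩ EE r t Δ (δ, Sum.inr cb)).card ≤ 1 :=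
          le_trans (Finset.card_le_card hsub) (by simp)
    _ ≤ t := ht
  · -- col ∩ row
    have hsub : EE r t Δ (γ, Sum.inr ca) ∩ EE r t Δ (δ, Sum.inl ib) ⊆
        {(δ, Sum.inl (ib, pAdd ca.1 ib.1))} := by
      intro v hv
      rw [Finset.mem_inter, mem_col, mem_row] at hv
      obtain ⟨hv1, ⟨k, rfl⟩⟩ := hv
      rcases hv1 with ⟨i', hi'⟩ | ⟨k', hk'⟩
      · simp only [Prod.mk.injEq, Sum.inl.injEq] at hi'
        rw [Finset.mem_singleton, hi'.2.1, hi'.2.2]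
      · simp at hk'
    calc (EE r t Δ (γ, Sum.inr ca) ∩ EE r t Δ (δ, Sum.inl ib)).card ≤ 1 :=
          le_trans (Finset.card_le_card hsub) (by simp)
    _ ≤ t := ht
  · -- col ∩ col
    have hsub : EE r t Δ (γ, Sum.inr ca) ∩ EE r t Δ (δ, Sum.inr cb) ⊆
        univ.image fun i : Fin t => ((γ, Sum.inl (i, pAdd ca.1 i.1)) : VI r t Δ) := by
      intro v hv
      rw [Finset.mem_inter, mem_col, mem_col] at hv
      obtain ⟨hv1, hv2⟩ := hv
      rcases hv1 with ⟨i', rfl⟩ | ⟨k', rfl⟩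
      · exact Finset.mem_image.2 ⟨i', Finset.mem_univ _, rfl⟩
      · rcases hv2 with ⟨i'', hi''⟩ | ⟨k'', hk''⟩
        · simp at hi''
        · simp only [Prod.mk.injEq, Sum.inr.injEq, Prod.mk.injEq] at hk''
          exact absurd (by rw [hk''.1, hk''.2.1]) hab
    calc (EE r t Δ (γ, Sum.inr ca) ∩ EE r t Δ (δ, Sum.inr cb)).card
        ≤ (univ.image fun i : Fin t => ((γ, Sum.inl (i, pAdd ca.1 i.1)) : VI r t Δ)).card :=
          Finset.card_le_card hsub
    _ ≤ t := le_trans Finset.card_image_le (by simp)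

/-- the position map witnessing r-partiteness -/
def PP (r t Δ : ℕ) : VI r t Δ → Fin r
  | (_, Sum.inl (_, k)) => k
  | (_, Sum.inr (c, k)) => pAdd c.1 (t + k.1)

lemma partite (htr : t ≤ r) :
    ∀ a : EI r t Δ, ∀ u ∈ EE r t Δ a, ∀ v ∈ EE r t Δ a, u ≠ v →
      PP r t Δ u ≠ PP r t Δ v := by
  rintro ⟨γ, i | c⟩ u hu v hv huv
  · rw [mem_row] at hu hv
    obtain ⟨k, rfl⟩ := hu; obtain ⟨k', rfl⟩ := hv
    simp only [PP, ne_eq]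
    intro h; exact huv (by rw [h])
  · rw [mem_col] at hu hv
    rcases hu with ⟨i, rfl⟩ | ⟨k, rfl⟩ <;> rcases hv with ⟨i', rfl⟩ | ⟨k', rfl⟩ <;>
      simp only [PP, ne_eq] <;> intro h
    · have hii := pAdd_left_inj (lt_of_lt_of_le i.2 htr) (lt_of_lt_of_le i'.2 htr) h
      exact huv (by have : i = i' := Fin.ext hii; rw [this])
    · have := pAdd_left_inj (lt_of_lt_of_le i.2 htr) (by omega : t + k'.1 < r) h
      omega
    · have := pAdd_left_inj (by omega : t + k.1 < r) (lt_of_lt_of_le i'.2 htr) h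
      omega
    · have := pAdd_left_inj (by omega : t + k.1 < r) (by omega : t + k'.1 < r) h
      exact huv (by have : k = k' := Fin.ext (by omega); rw [this])

end Inter


section Deg

variable {r t Δ : ℕ}

lemma deg_filter_row (htr : t ≤ r) (γ : Fin (ss r t Δ)) (i : Fin t) (k : Fin r) :
    (univ.filter fun a : EI r t Δ => ((γ, Sum.inl (i, k)) : VI r t Δ) ∈ EE r t Δ a) =
      insert ((γ, Sum.inl i) : EI r t Δ)
        (univ.image fun d : Fin (Δ - 1) => ((γ, Sum.inr (lsolve k i.1, d)) : EI r t Δ)) := by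
  have hit : i.1 ≤ r := le_of_lt (lt_of_lt_of_le i.2 htr)
  ext a
  simp only [mem_filter, mem_univ, true_and, mem_insert, mem_image]
  constructor
  · intro h
    obtain ⟨δ, j | c⟩ := a
    · rw [mem_row] at h
      obtain ⟨k', hk'⟩ := h
      simp only [Prod.mk.injEq, Sum.inl.injEq] at hk'
      exact Or.inl (by rw [hk'.1, hk'.2.1])
    · rw [mem_col] at h
      rcases h with ⟨i', hi'⟩ | ⟨k', hk'⟩
      · simp only [Prod.mk.injEq, Sum.inl.injEq] at hi'
        obtain ⟨hgd, hii', hkp⟩ := hi'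
        refine Or.inr ⟨c.2, ?_⟩
        have hc1 : c.1 = lsolve k i.1 := by
          apply pAdd_right_cancel (j := i.1)
          rw [pAdd_lsolve k hit, hii']
          exact hkp.symm
        refine Prod.ext hgd ?_
        show Sum.inr (lsolve k i.1, c.2) = Sum.inr c
        rw [← hc1]
      · simp at hk'
  · rintro (rfl | ⟨d, rfl⟩)
    · exact mem_row.2 ⟨k, rfl⟩
    · exact mem_col.2 (Or.inl ⟨i, by rw [pAdd_lsolve k hit]⟩)

lemma deg_row_eq (htr : t ≤ r) (hΔ : 2 ≤ Δ) (γ : Fin (ss r t Δ)) (i : Fin t) (k : Fin r) :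
    (univ.filter fun a : EI r t Δ => ((γ, Sum.inl (i, k)) : VI r t Δ) ∈ EE r t Δ a).card = Δ := by
  rw [deg_filter_row htr γ i k]
  have hnm : ((γ, Sum.inl i) : EI r t Δ) ∉
      univ.image fun d : Fin (Δ - 1) => ((γ, Sum.inr (lsolve k i.1, d)) : EI r t Δ) := by
    simp
  rw [Finset.card_insert_of_notMem hnm, Finset.card_image_of_injective _
    (fun a b h => by simpa using h : Function.Injective
      (fun d : Fin (Δ - 1) => ((γ, Sum.inr (lsolve k i.1, d)) : EI r t Δ)))]
  simp only [card_univ, Fintype.card_fin]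
  omega

lemma deg_free_eq (γ : Fin (ss r t Δ)) (c : CI r Δ) (k : Fin (r - t)) :
    (univ.filter fun a : EI r t Δ => ((γ, Sum.inr (c, k)) : VI r t Δ) ∈ EE r t Δ a).card = 1 := by
  have : (univ.filter fun a : EI r t Δ => ((γ, Sum.inr (c, k)) : VI r t Δ) ∈ EE r t Δ a) =
      {((γ, Sum.inr c) : EI r t Δ)} := by
    ext a
    simp only [mem_filter, mem_univ, true_and, mem_singleton]
    constructor
    · intro h
      obtain ⟨δ, j | c'⟩ := a
      · rw [mem_row] at h
        obtain ⟨k', hk'⟩ := h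
        simp at hk'
      · rw [mem_col] at h
        rcases h with ⟨i', hi'⟩ | ⟨k', hk'⟩
        · simp at hi'
        · simp only [Prod.mk.injEq, Sum.inr.injEq] at hk'
          rw [hk'.1, hk'.2.1]
      
    · rintro rfl
      exact mem_col.2 (Or.inr ⟨k, rfl⟩)
  rw [this, Finset.card_singleton]

lemma deg_le (htr : t ≤ r) (hΔ : 2 ≤ Δ) (w : VI r t Δ) :
    (univ.filter fun a : EI r t Δ => w ∈ EE r t Δ a).card ≤ Δ := by
  obtain ⟨γ, ⟨i, k⟩ | ⟨c, k⟩⟩ := w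
  · rw [deg_row_eq htr hΔ]
  · rw [deg_free_eq]; omega

end Deg


section ClassLB

variable {r t Δ : ℕ}

/-- decode a linear column index -/
def dCol (r Δ : ℕ) (hr0 : 0 < r) (j : ℕ) (hj : j < RR r Δ) : CI r Δ :=
  (⟨j % r, Nat.mod_lt _ hr0⟩,
   ⟨j / r, by rw [Nat.div_lt_iff_lt_mul hr0]; rw [RR, Nat.mul_comm] at hj; exact hj⟩)

lemma dCol_lin (r Δ : ℕ) (hr0 : 0 < r) (j : ℕ) (hj : j < RR r Δ) :
    (dCol r Δ hr0 j hj).1.1 + r * (dCol r Δ hr0 j hj).2.1 = j := Nat.mod_add_div j r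

lemma class_lb (ht : 1 ≤ t) (htr : t ≤ r) (hΔ : 2 ≤ Δ) (x : ℕ) (hx : x < nn r t Δ) :
    ss r t Δ ≤ (univ.filter fun a : EI r t Δ => cN r t Δ a = x).card := by
  have hr : 1 ≤ r := le_trans ht htr
  have hr0 : 0 < r := hr
  have hR : r ≤ RR r Δ := hRr hr hΔ
  have hss : ss r t Δ = RR r Δ + t - 1 := rfl
  have hnn : nn r t Δ = RR r Δ + t := rfl
  suffices h : (univ : Finset (Fin (ss r t Δ))).card ≤
      (univ.filter fun a : EI r t Δ => cN r t Δ a = x).card by simpa using h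
  by_cases hC : x = t - 1
  · -- region C : x = t-1
    apply Finset.card_le_card_of_injOn (f := fun j : Fin (ss r t Δ) =>
      if h1 : j.1 < RR r Δ - (t - 1) then
        ((⟨t - 1, by omega⟩, Sum.inr (dCol r Δ hr0 (t - 1 + j.1) (by omega))) : EI r t Δ)
      else if h2 : j.1 < RR r Δ then
        (⟨t - 2, by have := j.2; omega⟩, Sum.inl ⟨j.1 - (RR r Δ - (t - 1)), by omega⟩)
      else (⟨j.1 - RR r Δ, by have := j.2; omega⟩, Sum.inl ⟨t - 1, by have := j.2; omega⟩))
    · intro j _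
      simp only [mem_filter, mem_univ, true_and]
      split_ifs with h1 h2
      · rw [Finset.mem_coe, Finset.mem_filter]
        simp only [mem_univ, true_and, cN, Fin.val_mk, dCol_lin]
        split_ifs <;> omega
      · have := j.2
        rw [Finset.mem_coe, Finset.mem_filter]
        simp only [mem_univ, true_and, cN, Fin.val_mk]
        split_ifs <;> omega
      · have := j.2
        rw [Finset.mem_coe, Finset.mem_filter]
        simp only [mem_univ, true_and, cN, Fin.val_mk]
        split_ifs <;> omega
    · intro j _ j' _ heq
      simp only at heq
      split_ifs at heq
      all_goals simp only [dCol, Prod.mk.injEq, Sum.inl.injEq, Sum.inr.injEq,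
        Fin.mk.injEq, reduceCtorEq, false_and, and_false, true_and, and_true] at heq
      · obtain ⟨hmod, hdiv⟩ := heq
        have e1 := Nat.mod_add_div (t - 1 + j.1) r
        have e2 := Nat.mod_add_div (t - 1 + j'.1) r
        have e3 : r * ((t - 1 + j.1) / r) = r * ((t - 1 + j'.1) / r) := by rw [hdiv]
        exact Fin.ext (by omega)
      · exact Fin.ext (by omega)
      · exact Fin.ext (by omega)
      · exact Fin.ext (by omega)
      · exact Fin.ext (by omega)
  · by_cases hD : x = nn r t Δ - 1
    · -- region D : x = n-1
      apply Finset.card_le_card_of_injOn (f := fun j : Fin (ss r t Δ) =>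
        if h1 : j.1 < t - 1 then
          ((⟨ss r t Δ - 1, by omega⟩, Sum.inl ⟨j.1, by omega⟩) : EI r t Δ)
        else (⟨j.1, j.2⟩, Sum.inl ⟨t - 1, by omega⟩))
      · intro j _
        simp only [mem_filter, mem_univ, true_and]
        split_ifs with h1
        · rw [Finset.mem_coe, Finset.mem_filter]
          simp only [mem_univ, true_and, cN, Fin.val_mk]
          split_ifs <;> omega
        · have := j.2
          rw [Finset.mem_coe, Finset.mem_filter]
          simp only [mem_univ, true_and, cN, Fin.val_mk]
          split_ifs <;> omega
      · intro j _ j' _ heq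
        simp only at heq
        split_ifs at heq
        all_goals simp only [Prod.mk.injEq, Sum.inl.injEq, Fin.mk.injEq,
          reduceCtorEq, false_and, and_false, true_and, and_true] at heq
        · exact Fin.ext (by omega)
        · exact Fin.ext (by omega)
        · exact Fin.ext (by omega)
        · exact Fin.ext (by omega)
    · by_cases hA : x = 0
      · -- region A : x = 0 (and t ≥ 2 since x ≠ t-1)
        have ht2 : 2 ≤ t := by omega
        apply Finset.card_le_card_of_injOn (f := fun j : Fin (ss r t Δ) =>
          if h1 : j.1 < RR r Δ then
            ((⟨0, by omega⟩, Sum.inr (dCol r Δ hr0 j.1 h1)) : EI r t Δ)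
          else (⟨t - 1, by omega⟩, Sum.inr (dCol r Δ hr0 (j.1 - RR r Δ) (by have := j.2; omega))))
        · intro j _
          simp only [mem_filter, mem_univ, true_and]
          split_ifs with h1
          · rw [Finset.mem_coe, Finset.mem_filter]
            simp only [mem_univ, true_and, cN, Fin.val_mk, dCol_lin]
            split_ifs <;> omega
          · have := j.2
            rw [Finset.mem_coe, Finset.mem_filter]
            simp only [mem_univ, true_and, cN, Fin.val_mk, dCol_lin]
            split_ifs <;> omega
        · intro j _ j' _ heq
          simp only at heq
          split_ifs at heq
          all_goals simp only [dCol, Prod.mk.injEq, Sum.inr.injEq, Fin.mk.injEq,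
            reduceCtorEq, false_and, and_false, true_and, and_true] at heq
          · obtain ⟨hmod, hdiv⟩ := heq
            have e1 := Nat.mod_add_div j.1 r
            have e2 := Nat.mod_add_div j'.1 r
            have e3 : r * (j.1 / r) = r * (j'.1 / r) := by rw [hdiv]
            exact Fin.ext (by omega)
          · exact Fin.ext (by omega)
          · exact Fin.ext (by omega)
          · obtain ⟨hmod, hdiv⟩ := heq
            have := j.2; have := j'.2
            have e1 := Nat.mod_add_div (j.1 - RR r Δ) r
            have e2 := Nat.mod_add_div (j'.1 - RR r Δ) r
            have e3 : r * ((j.1 - RR r Δ) / r) = r * ((j'.1 - RR r Δ) / r) := by rw [hdiv]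
            exact Fin.ext (by omega)
      · -- region B : 1 ≤ x ≤ ss - 1, x ≠ t-1
        have hx1 : 1 ≤ x := by omega
        have hxs : x < ss r t Δ := by omega
        apply Finset.card_le_card_of_injOn (f := fun j : Fin (ss r t Δ) =>
          if h1 : j.1 < RR r Δ then
            ((⟨x, hxs⟩, Sum.inr (dCol r Δ hr0 j.1 h1)) : EI r t Δ)
          else (⟨x - 1, by omega⟩, Sum.inl ⟨j.1 - RR r Δ, by have := j.2; omega⟩))
        · intro j _
          simp only [mem_filter, mem_univ, true_and]
          split_ifs with h1
          · rw [Finset.mem_coe, Finset.mem_filter]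
            simp only [mem_univ, true_and, cN, Fin.val_mk, dCol_lin]
            split_ifs <;> omega
          · have := j.2
            rw [Finset.mem_coe, Finset.mem_filter]
            simp only [mem_univ, true_and, cN, Fin.val_mk]
            split_ifs <;> omega
        · intro j _ j' _ heq
          simp only at heq
          split_ifs at heq
          all_goals simp only [dCol, Prod.mk.injEq, Sum.inl.injEq, Sum.inr.injEq,
            Fin.mk.injEq, reduceCtorEq, false_and, and_false, true_and, and_true] at heq
          · obtain ⟨hmod, hdiv⟩ := heq
            have e1 := Nat.mod_add_div j.1 r
            have e2 := Nat.mod_add_div j'.1 r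
            have e3 : r * (j.1 / r) = r * (j'.1 / r) := by rw [hdiv]
            exact Fin.ext (by omega)
          · exact Fin.ext (by omega)

end ClassLB


section NoFRM

variable {r t Δ : ℕ}

lemma noFRM (ht : 1 ≤ t) (htr : t ≤ r) (hΔ : 2 ≤ Δ) :
    ¬ ∃ f : Fin (nn r t Δ) → EI r t Δ,
      (∀ i, cN r t Δ (f i) = i.1) ∧
      (∀ i j, i ≠ j → Disjoint (EE r t Δ (f i)) (EE r t Δ (f j))) := by
  rintro ⟨f, hc, hd⟩
  have hr : 1 ≤ r := le_trans ht htr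
  have hR : r ≤ RR r Δ := hRr hr hΔ
  have hR1 : 1 ≤ RR r Δ := le_trans hr hR
  have hss : ss r t Δ = RR r Δ + t - 1 := rfl
  have hnn : nn r t Δ = RR r Δ + t := rfl
  have clash : ∀ (χ χ' : Fin (nn r t Δ)) (γ : Fin (ss r t Δ)) (i : Fin t) (cd : CI r Δ),
      χ ≠ χ' → f χ = (γ, Sum.inl i) → f χ' = (γ, Sum.inr cd) → False := by
    intro χ χ' γ i cd hne h1 h2
    have hD := hd χ χ' hne
    rw [h1, h2] at hD
    exact row_col_not_disjoint γ i cd hD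
  by_cases hA : ∃ (χ : Fin (nn r t Δ)) (γ : Fin (ss r t Δ)) (i : Fin t),
      f χ = (γ, Sum.inl i) ∧ γ.1 = t - 1
  · -- Case A : some root row is used
    obtain ⟨χ₀, γ₀, i₀, hf0, hγ0⟩ := hA
    have hχ₀ : χ₀.1 = t ∨ χ₀.1 = nn r t Δ - 1 := by
      have h := hc χ₀
      rw [hf0] at h
      simp only [cN] at h
      split_ifs at h <;> omega
    have claim1 : ∀ j : ℕ, ∀ χ : Fin (nn r t Δ), χ.1 = j → j < t - 1 →
        ∃ (γ : Fin (ss r t Δ)) (cd : CI r Δ), f χ = (γ, Sum.inr cd) ∧ γ.1 = j := by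
      intro j
      induction j using Nat.strong_induction_on with
      | _ j IH =>
        intro χ hχ hjt
        have hcχ := hc χ
        rw [hχ] at hcχ
        rcases hfe : f χ with ⟨γ, i | cd⟩
        · rw [hfe] at hcχ
          simp only [cN] at hcχ
          split_ifs at hcχ with b1 b2
          · -- a row of gadget j-1 : clashes with the column of color j-1
            obtain ⟨γ', cd', hf', hγ'⟩ := IH (j-1) (by omega) ⟨j-1, by omega⟩ rfl (by omega)
            have hγγ : γ' = γ := Fin.ext (by omega)
            rw [hγγ] at hf'
            refine (clash χ ⟨j-1, by omega⟩ γ i cd' ?_ hfe hf').elim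
            intro hh
            have hv := congrArg Fin.val hh
            simp only [Fin.val_mk] at hv
            omega
          · omega
          · omega
        · rw [hfe] at hcχ
          simp only [cN] at hcχ
          split_ifs at hcχ with b1 b2
          · -- a root column : clashes with the used root row
            have hγγ : γ₀ = γ := Fin.ext (by omega)
            rw [hγγ] at hf0
            refine (clash χ₀ χ γ i₀ cd ?_ hf0 hfe).elim
            intro hh
            have hv := congrArg Fin.val hh
            omega
          · omega
          · exact ⟨γ, cd, rfl, hcχ⟩
    -- the color t-1 has no available edge
    obtain ⟨χ₁, hχ₁⟩ : ∃ χ : Fin (nn r t Δ), χ.1 = t - 1 := ⟨⟨t-1, by omega⟩, rfl⟩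
    have hcχ := hc χ₁
    rw [hχ₁] at hcχ
    rcases hfe : f χ₁ with ⟨γ, i | cd⟩
    · rw [hfe] at hcχ
      simp only [cN] at hcχ
      split_ifs at hcχ with b1 b2
      · -- row of gadget t-2
        obtain ⟨γ', cd', hf', hγ'⟩ := claim1 (t-2) ⟨t-2, by omega⟩ rfl (by omega)
        have hγγ : γ' = γ := Fin.ext (by omega)
        rw [hγγ] at hf'
        refine clash χ₁ ⟨t-2, by omega⟩ γ i cd' ?_ hfe hf'
        intro hh
        have hv := congrArg Fin.val hh
        simp only [Fin.val_mk] at hv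
        omega
      · -- else-row of a gadget γ with γ.1 < t-1
        obtain ⟨γ', cd', hf', hγ'⟩ := claim1 γ.1 ⟨γ.1, by omega⟩ rfl (by omega)
        have hγγ : γ' = γ := Fin.ext (by omega)
        rw [hγγ] at hf'
        refine clash χ₁ ⟨γ.1, by omega⟩ γ i cd' ?_ hfe hf'
        intro hh
        have hv := congrArg Fin.val hh
        simp only [Fin.val_mk] at hv
        omega
      · omega
    · rw [hfe] at hcχ
      simp only [cN] at hcχ
      split_ifs at hcχ with b1 b2
      · omega
      · -- root column : clashes with the used root row
        have hγγ : γ₀ = γ := Fin.ext (by omega)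
        rw [hγγ] at hf0
        refine clash χ₀ χ₁ γ i₀ cd ?_ hf0 hfe
        intro hh
        have hv := congrArg Fin.val hh
        omega
      · omega
  · -- Case B : no root row is used
    push_neg at hA
    have claim2 : ∀ m : ℕ, ∀ χ : Fin (nn r t Δ), χ.1 = t + m → m < RR r Δ - 1 →
        ∃ (γ : Fin (ss r t Δ)) (cd : CI r Δ), f χ = (γ, Sum.inr cd) ∧ γ.1 = t + m := by
      intro m
      induction m using Nat.strong_induction_on with
      | _ m IH =>
        intro χ hχ hm
        have hcχ := hc χ
        rw [hχ] at hcχ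
        rcases hfe : f χ with ⟨γ, i | cd⟩
        · rw [hfe] at hcχ
          simp only [cN] at hcχ
          split_ifs at hcχ with b1 b2
          · rcases Nat.eq_zero_or_pos m with hm0 | hm1
            · exact absurd (show γ.1 = t - 1 by omega) (hA χ γ i hfe)
            · obtain ⟨γ', cd', hf', hγ'⟩ := IH (m-1) (by omega) ⟨t+(m-1), by omega⟩ rfl (by omega)
              have hγγ : γ' = γ := Fin.ext (by omega)
              rw [hγγ] at hf'
              refine (clash χ ⟨t+(m-1), by omega⟩ γ i cd' ?_ hfe hf').elim
              intro hh
              have hv := congrArg Fin.val hh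
              simp only [Fin.val_mk] at hv
              omega
          · omega
          · omega
        · rw [hfe] at hcχ
          simp only [cN] at hcχ
          split_ifs at hcχ with b1 b2
          · omega
          · omega
          · exact ⟨γ, cd, rfl, hcχ⟩
    -- the last color nn-1 has no available edge
    obtain ⟨χ₄, hχ₄⟩ : ∃ χ : Fin (nn r t Δ), χ.1 = nn r t Δ - 1 :=
      ⟨⟨nn r t Δ - 1, by omega⟩, rfl⟩
    have hcχ := hc χ₄
    rw [hχ₄] at hcχ
    rcases hfe : f χ₄ with ⟨γ, i | cd⟩
    · rw [hfe] at hcχ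
      simp only [cN] at hcχ
      split_ifs at hcχ with b1 b2
      · -- row of gadget nn-2
        by_cases hRR1 : RR r Δ = 1
        · exact absurd (show γ.1 = t - 1 by omega) (hA χ₄ γ i hfe)
        · obtain ⟨γ', cd', hf', hγ'⟩ :=
            claim2 (RR r Δ - 2) ⟨t + (RR r Δ - 2), by omega⟩ rfl (by omega)
          have hγγ : γ' = γ := Fin.ext (by omega)
          rw [hγγ] at hf'
          refine clash χ₄ ⟨t + (RR r Δ - 2), by omega⟩ γ i cd' ?_ hfe hf'
          intro hh
          have hv := congrArg Fin.val hh
          simp only [Fin.val_mk] at hv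
          omega
      · omega
      · -- else-row with γ.1 ≥ t-1
        by_cases hg : γ.1 = t - 1
        · exact absurd hg (hA χ₄ γ i hfe)
        · have hγ2 := γ.2
          obtain ⟨γ', cd', hf', hγ'⟩ := claim2 (γ.1 - t) ⟨γ.1, by omega⟩
            (by simp only [Fin.val_mk]; omega) (by omega)
          have hγγ : γ' = γ := Fin.ext (by omega)
          rw [hγγ] at hf'
          refine clash χ₄ ⟨γ.1, by omega⟩ γ i cd' ?_ hfe hf'
          intro hh
          have hv := congrArg Fin.val hh
          simp only [Fin.val_mk] at hv
          omega
    · rw [hfe] at hcχ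
      simp only [cN] at hcχ
      split_ifs at hcχ with b1 b2
      · omega
      · omega
      · have := γ.2; omega

end NoFRM


section Final

variable {r t Δ : ℕ}

lemma cN_lt (ht : 1 ≤ t) (htr : t ≤ r) (hΔ : 2 ≤ Δ) (e : EI r t Δ) :
    cN r t Δ e < nn r t Δ := by
  have hr : 1 ≤ r := le_trans ht htr
  have hR1 : 1 ≤ RR r Δ := le_trans hr (hRr hr hΔ)
  have hss : ss r t Δ = RR r Δ + t - 1 := rfl
  have hnn : nn r t Δ = RR r Δ + t := rfl
  obtain ⟨γ, i | cd⟩ := e <;> (have := γ.2; simp only [cN]; split_ifs <;> omega)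

lemma card_filter_equiv {α β : Type} [Fintype α] [Fintype β] (e : α ≃ β) (p : β → Prop)
    [DecidablePred p] [DecidablePred fun a => p (e a)] :
    (univ.filter fun a => p (e a)).card = (univ.filter p).card := by
  refine Finset.card_bij (fun a _ => e a) ?_ ?_ ?_
  · intro a ha; simp only [mem_filter, mem_univ, true_and] at ha ⊢; exact ha
  · intro a _ b _ h; exact e.injective h
  · intro b hb; simp only [mem_filter, mem_univ, true_and] at hb
    exact ⟨e.symm b, by simp [hb], by simp⟩

end Final

end Stmt3C


open Stmt3C in
/-- For all `1 ≤ t ≤ r` and `Δ ≥ 2` there is an edge-colored `t`-simple `r`-partite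
`r`-graph with maximum degree `Δ`, all color classes of size at least `r(Δ-1)+t-1`,
and no full rainbow matching. -/
theorem stmt3 (t r Δ : ℕ) (ht : 1 ≤ t) (htr : t ≤ r) (hΔ : 2 ≤ Δ) :
    ∃ (N M n : ℕ) (E : Fin M → Finset (Fin N)) (c : Fin M → Fin n),
      (∀ a, (E a).card = r) ∧
      (∀ a b, a ≠ b → (E a ∩ E b).card ≤ t) ∧
      (∃ P : Fin N → Fin r, ∀ a, ∀ u ∈ E a, ∀ v ∈ E a, u ≠ v → P u ≠ P v) ∧
      (∀ v, mhDeg E v ≤ Δ) ∧ (∃ v, mhDeg E v = Δ) ∧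
      (∀ i : Fin n, r * (Δ - 1) + t - 1 ≤ classSize c i) ∧
      ¬ hasFullRainbowMatching E c := by
  classical
  have hr : 1 ≤ r := le_trans ht htr
  have hR : r ≤ RR r Δ := hRr hr hΔ
  have hR1 : 1 ≤ RR r Δ := le_trans hr hR
  have hss : ss r t Δ = RR r Δ + t - 1 := rfl
  have hnn : nn r t Δ = RR r Δ + t := rfl
  let eI := Fintype.equivFin (EI r t Δ)
  let eV := Fintype.equivFin (VI r t Δ)
  refine ⟨Fintype.card (VI r t Δ), Fintype.card (EI r t Δ), nn r t Δ,
    fun m => (EE r t Δ (eI.symm m)).map eV.toEmbedding,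
    fun m => ⟨cN r t Δ (eI.symm m), cN_lt ht htr hΔ _⟩, ?_, ?_, ?_, ?_, ?_, ?_, ?_⟩
  · -- all edges have r vertices
    intro a
    rw [Finset.card_map]
    obtain ⟨γ, i | cd⟩ := eI.symm a
    · exact card_row γ i
    · exact card_col htr γ cd
  · -- t-simplicity
    intro a b hab
    rw [← Finset.map_inter, Finset.card_map]
    exact inter_card_le ht (fun h => hab (by
      have := congrArg eI h; simpa using this))
  · -- r-partiteness
    refine ⟨fun v => PP r t Δ (eV.symm v), ?_⟩
    intro a u hu v hv huv
    rw [Finset.mem_map_equiv] at hu hv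
    exact partite htr (eI.symm a) _ hu _ hv (fun h => huv (by
      have := congrArg eV h; simpa using this))
  · -- max degree at most Δ
    intro v
    show (univ.filter fun m => v ∈ (EE r t Δ (eI.symm m)).map eV.toEmbedding).card ≤ Δ
    rw [Finset.filter_congr (fun m _ => by rw [Finset.mem_map_equiv]),
      card_filter_equiv eI.symm (fun a => eV.symm v ∈ EE r t Δ a)]
    exact deg_le htr hΔ (eV.symm v)
  · -- max degree attained
    refine ⟨eV (⟨0, by omega⟩, Sum.inl (⟨0, by omega⟩, ⟨0, by omega⟩)), ?_⟩
    show (univ.filter fun m => _ ∈ (EE r t Δ (eI.symm m)).map eV.toEmbedding).card = Δ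
    rw [Finset.filter_congr (fun m _ => by rw [Finset.mem_map_equiv]),
      card_filter_equiv eI.symm
        (fun a => eV.symm (eV (⟨0, by omega⟩, Sum.inl (⟨0, by omega⟩, ⟨0, by omega⟩)))
          ∈ EE r t Δ a)]
    simp only [Equiv.symm_apply_apply]
    exact deg_row_eq htr hΔ _ _ _
  · -- class sizes
    intro i
    show r * (Δ - 1) + t - 1 ≤
      (univ.filter fun m => (⟨cN r t Δ (eI.symm m), cN_lt ht htr hΔ _⟩ : Fin (nn r t Δ)) = i).card
    rw [Finset.filter_congr (fun m _ => by rw [Fin.ext_iff]),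
      card_filter_equiv eI.symm (fun a => cN r t Δ a = i.1)]
    exact class_lb ht htr hΔ i.1 i.2
  · -- no full rainbow matching
    rintro ⟨f, hf1, hf2⟩
    refine noFRM ht htr hΔ ⟨fun i => eI.symm (f i), fun i => ?_, fun i j hij => ?_⟩
    · have := congrArg Fin.val (hf1 i)
      simpa using this
    · exact (Finset.disjoint_map _).1 (hf2 i j hij)
end

section
/- For every integer Δ ≥ 2, there exist a bipartite simple graph H and a list assignment L for the edges of H such that (H, L) has maximum color degree Δ, |L(e)| = Δ for every edge e of H, and there is no proper L-coloring of H. -/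
open Finset

set_option linter.unusedSectionVars false

namespace Stmt10Aux

variable (p : ℕ) [NeZero p]

def code (u i : ZMod p) : ℕ := i.val + p * u.val

def αz (r i : ZMod p) : ZMod p := if r = 0 ∧ i = 0 then 1 else 0

abbrev Idx := ZMod p × (ZMod p × Fin p)
abbrev Vtx := ZMod p ⊕ (ZMod p × Fin p)

def hostSlot : Fin p := ⟨p - 1, by have := NeZero.pos p; omega⟩

def E' (ι : Idx p) : Finset (Vtx p) := {Sum.inl ι.1, Sum.inr ι.2}

def L' (ι : Idx p) : Finset ℕ :=
  if ι.2.2 = hostSlot p then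
    (univ : Finset (ZMod p)).image (fun u => code p u ι.2.1)
  else
    (univ : Finset (ZMod p)).image (fun i => code p (ι.2.1 + αz p ι.1 i) i)

lemma code_lt (u i : ZMod p) : code p u i < p * p := by
  have h1 : i.val < p := ZMod.val_lt i
  have h2 : u.val < p := ZMod.val_lt u
  unfold code; nlinarith

lemma code_mod (u i : ZMod p) : code p u i % p = i.val := by
  unfold code
  rw [Nat.add_mul_mod_self_left, Nat.mod_eq_of_lt (ZMod.val_lt i)]

lemma code_div (u i : ZMod p) : code p u i / p = u.val := by
  unfold code
  rw [Nat.add_mul_div_left _ _ (NeZero.pos p), Nat.div_eq_of_lt (ZMod.val_lt i), Nat.zero_add]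

lemma val_inj {x y : ZMod p} (h : x.val = y.val) : x = y := by
  have hx : ((x.val : ℕ) : ZMod p) = x := by rw [ZMod.natCast_val, ZMod.cast_id]
  have hy : ((y.val : ℕ) : ZMod p) = y := by rw [ZMod.natCast_val, ZMod.cast_id]
  rw [← hx, ← hy, h]

lemma code_inj {u i u' i' : ZMod p} (h : code p u i = code p u' i') : u = u' ∧ i = i' := by
  constructor
  · apply val_inj p
    have := congrArg (· / p) h
    simpa [code_div] using this
  · apply val_inj p
    have := congrArg (· % p) h
    simpa [code_mod] using this

lemma castval (x : ZMod p) : ((x.val : ℕ) : ZMod p) = x := by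
  rw [ZMod.natCast_val, ZMod.cast_id]

lemma mem_E' {v : Vtx p} {ι : Idx p} : v ∈ E' p ι ↔ v = Sum.inl ι.1 ∨ v = Sum.inr ι.2 := by
  simp [E']

lemma E'_card (ι : Idx p) : (E' p ι).card = 2 := by
  rw [E', Finset.card_insert_of_notMem (by simp), Finset.card_singleton]

lemma E'_injective : Function.Injective (E' p) := by
  intro ι κ h
  have h1 : (Sum.inl ι.1 : Vtx p) ∈ E' p κ := by rw [← h]; simp [E']
  have h2 : (Sum.inr ι.2 : Vtx p) ∈ E' p κ := by rw [← h]; simp [E']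
  rw [mem_E'] at h1 h2
  have e1 : ι.1 = κ.1 := by
    rcases h1 with h' | h'
    · exact Sum.inl.inj h'
    · exact absurd h' (by simp)
  have e2 : ι.2 = κ.2 := by
    rcases h2 with h' | h'
    · exact absurd h' (by simp)
    · exact Sum.inr.inj h'
  exact Prod.ext e1 e2

lemma mem_L'_host {x : ℕ} {ι : Idx p} (hh : ι.2.2 = hostSlot p) :
    x ∈ L' p ι ↔ ∃ u, x = code p u ι.2.1 := by
  unfold L'; rw [if_pos hh]
  simp [eq_comm]

lemma mem_L'_core {x : ℕ} {ι : Idx p} (hh : ι.2.2 ≠ hostSlot p) :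
    x ∈ L' p ι ↔ ∃ i, x = code p (ι.2.1 + αz p ι.1 i) i := by
  unfold L'; rw [if_neg hh]
  simp [eq_comm]

lemma L'_card (ι : Idx p) : (L' p ι).card = p := by
  unfold L'
  split
  · rw [Finset.card_image_of_injective _ (fun u u' h => (code_inj p h).1), card_univ, ZMod.card]
  · rw [Finset.card_image_of_injective _ (fun i i' h => (code_inj p h).2), card_univ, ZMod.card]

lemma mem_L'_lt {x : ℕ} {ι : Idx p} (h : x ∈ L' p ι) : x < p * p := by
  unfold L' at h
  split at h <;> {
    rw [Finset.mem_image] at h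
    obtain ⟨u, -, rfl⟩ := h
    exact code_lt p _ _ }

lemma cd_bound (col : ℕ) (v : Vtx p) :
    ((univ : Finset (Idx p)).filter (fun ι => col ∈ L' p ι ∧ v ∈ E' p ι)).card ≤ p := by
  rcases v with r | σ
  · -- center vertex
    have hfix : ∀ ι ∈ (univ : Finset (Idx p)).filter
        (fun ι => col ∈ L' p ι ∧ (Sum.inl r : Vtx p) ∈ E' p ι), ι.1 = r := by
      intro ι hι
      rcases (mem_E' p).1 (mem_filter.1 hι).2.2 with h | h
      · exact (Sum.inl.inj h).symm
      · exact absurd h (by simp)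
    calc ((univ : Finset (Idx p)).filter _).card
        ≤ (univ : Finset (Fin p)).card := by
          apply Finset.card_le_card_of_injOn (fun ι => ι.2.2) (fun _ _ => mem_univ _)
          intro ι hι κ hκ hmk
          simp only [Finset.mem_coe, mem_filter, mem_univ, true_and] at hι hκ
          have hmk' : ι.2.2 = κ.2.2 := hmk
          have hι1 := hfix ι (mem_filter.2 ⟨mem_univ _, hι⟩)
          have hκ1 := hfix κ (mem_filter.2 ⟨mem_univ _, hκ⟩)
          have hcolι := hι.1
          have hcolκ := hκ.1
          have e2 : ι.2.1 = κ.2.1 := by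
            by_cases hh : ι.2.2 = hostSlot p
            · have hh' : κ.2.2 = hostSlot p := by rw [← hmk']; exact hh
              obtain ⟨u, hu⟩ := (mem_L'_host p hh).1 hcolι
              obtain ⟨u', hu'⟩ := (mem_L'_host p hh').1 hcolκ
              exact (code_inj p (hu.symm.trans hu')).2
            · have hh' : κ.2.2 ≠ hostSlot p := by rw [← hmk']; exact hh
              obtain ⟨i, hi⟩ := (mem_L'_core p hh).1 hcolι
              obtain ⟨i', hi'⟩ := (mem_L'_core p hh').1 hcolκ
              obtain ⟨ha, hb⟩ := code_inj p (hi.symm.trans hi')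
              rw [hι1, hκ1, ← hb] at ha
              exact add_right_cancel ha
          exact Prod.ext (hι1.trans hκ1.symm) (Prod.ext e2 hmk')
      _ = p := by simp
  · -- position vertex
    have hfix : ∀ ι ∈ (univ : Finset (Idx p)).filter
        (fun ι => col ∈ L' p ι ∧ (Sum.inr σ : Vtx p) ∈ E' p ι), ι.2 = σ := by
      intro ι hι
      rcases (mem_E' p).1 (mem_filter.1 hι).2.2 with h | h
      · exact absurd h (by simp)
      · exact (Sum.inr.inj h).symm
    calc ((univ : Finset (Idx p)).filter _).card
        ≤ (univ : Finset (ZMod p)).card := by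
          apply Finset.card_le_card_of_injOn (fun ι => ι.1) (fun _ _ => mem_univ _)
          intro ι hι κ hκ hmk
          have hmk' : ι.1 = κ.1 := hmk
          exact Prod.ext hmk' ((hfix ι (Finset.mem_coe.1 hι)).trans (hfix κ (Finset.mem_coe.1 hκ)).symm)
      _ = p := by simp [ZMod.card]

lemma cd_eq :
    ((univ : Finset (Idx p)).filter
      (fun ι => code p 0 0 ∈ L' p ι ∧ (Sum.inr ((0 : ZMod p), hostSlot p) : Vtx p) ∈ E' p ι)).card = p := by
  have hset : ((univ : Finset (Idx p)).filter
      (fun ι => code p 0 0 ∈ L' p ι ∧ (Sum.inr ((0 : ZMod p), hostSlot p) : Vtx p) ∈ E' p ι))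
      = (univ : Finset (ZMod p)).image (fun r => (r, ((0 : ZMod p), hostSlot p))) := by
    ext ι
    simp only [mem_filter, mem_univ, true_and, mem_image]
    constructor
    · rintro ⟨-, hv⟩
      rcases (mem_E' p).1 hv with h | h
      · exact absurd h (by simp)
      · refine ⟨ι.1, ?_⟩
        exact Prod.ext rfl (Sum.inr.inj h)
    · rintro ⟨r, -, rfl⟩
      refine ⟨?_, ?_⟩
      · rw [mem_L'_host p rfl]
        exact ⟨0, by rfl⟩
      · rw [mem_E']; right; rfl
  rw [hset, Finset.card_image_of_injective _ (fun a b h => (Prod.ext_iff.1 h).1), card_univ,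
    ZMod.card]


lemma no_coloring [Fact (1 < p)] (φ : Idx p → ℕ) (hmem : ∀ ι, φ ι ∈ L' p ι)
    (hprop : ∀ ι κ : Idx p, ι ≠ κ → ¬ Disjoint (E' p ι) (E' p κ) → φ ι ≠ φ κ) : False := by
  classical
  -- properness at shared center / position
  have propC : ∀ ι κ : Idx p, ι.1 = κ.1 → ι ≠ κ → φ ι ≠ φ κ := by
    intro ι κ h1 hne
    apply hprop ι κ hne
    rw [Finset.not_disjoint_iff]
    exact ⟨Sum.inl ι.1, by simp [E'], by simp [E', h1]⟩
  have propP : ∀ ι κ : Idx p, ι.2 = κ.2 → ι ≠ κ → φ ι ≠ φ κ := by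
    intro ι κ h2 hne
    apply hprop ι κ hne
    rw [Finset.not_disjoint_iff]
    exact ⟨Sum.inr ι.2, by simp [E'], by simp [E', h2]⟩
  have hlt : ∀ ι, φ ι < p * p := fun ι => mem_L'_lt p (hmem ι)
  -- star sets
  have hCrcard : ∀ r : ZMod p, ((univ : Finset (Idx p)).filter (fun ι => ι.1 = r)).card = p * p := by
    intro r
    have himg : ((univ : Finset (Idx p)).filter (fun ι => ι.1 = r))
        = (univ : Finset (ZMod p × Fin p)).image (fun σ => (r, σ)) := by
      ext ι
      simp only [mem_filter, mem_univ, true_and, mem_image]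
      constructor
      · intro h; exact ⟨ι.2, Prod.ext h.symm rfl⟩
      · rintro ⟨σ, rfl⟩; rfl
    rw [himg, Finset.card_image_of_injective _ (fun a b h => (Prod.ext_iff.1 h).2), card_univ]
    simp [ZMod.card]
  have hinjCr : ∀ r : ZMod p, Set.InjOn φ ((univ : Finset (Idx p)).filter (fun ι => ι.1 = r)) := by
    intro r ι hι κ hκ h
    simp only [Finset.mem_coe, mem_filter, mem_univ, true_and] at hι hκ
    by_contra hne
    exact propC ι κ (hι.trans hκ.symm) hne h
  have hsurj : ∀ (r : ZMod p) (x : ℕ), x < p * p → ∃ ι : Idx p, ι.1 = r ∧ φ ι = x := by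
    intro r x hx
    have himageCr : ((univ : Finset (Idx p)).filter (fun ι => ι.1 = r)).image φ
        = Finset.range (p*p) := by
      apply Finset.eq_of_subset_of_card_le
      · intro y hy
        rw [Finset.mem_image] at hy
        obtain ⟨ι, -, rfl⟩ := hy
        exact Finset.mem_range.2 (hlt ι)
      · rw [Finset.card_range, Finset.card_image_of_injOn (hinjCr r), hCrcard]
    have : x ∈ ((univ : Finset (Idx p)).filter (fun ι => ι.1 = r)).image φ := by
      rw [himageCr]; exact Finset.mem_range.2 hx
    rw [Finset.mem_image] at this
    obtain ⟨ι, hι, h⟩ := this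
    exact ⟨ι, (mem_filter.1 hι).2, h⟩
  -- host colors
  have hcolhost : ∀ r i : ZMod p, ∃ u : ZMod p, φ (r, (i, hostSlot p)) = code p u i := by
    intro r i
    have := hmem (r, (i, hostSlot p))
    rw [mem_L'_host p rfl] at this
    exact this
  -- the weight function
  set f : ℕ → ZMod p := fun x => ((x / p : ℕ) : ZMod p) with hf
  have hfcode : ∀ u i : ZMod p, f (code p u i) = u := by
    intro u i
    rw [hf]; simp only
    rw [code_div, castval]
  -- Way 1 : global host sum equals sum over all colors
  have hginj : ∀ q ∈ (univ : Finset (ZMod p × ZMod p)), ∀ q' ∈ (univ : Finset (ZMod p × ZMod p)),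
      φ (q.1, (q.2, hostSlot p)) = φ (q'.1, (q'.2, hostSlot p)) → q = q' := by
    rintro ⟨r, i⟩ - ⟨r', i'⟩ - h
    obtain ⟨u, hu⟩ := hcolhost r i
    obtain ⟨u', hu'⟩ := hcolhost r' i'
    simp only at h hu hu'
    rw [hu, hu'] at h
    obtain ⟨e1, e2⟩ := code_inj p h
    subst e2
    by_contra hne
    have hrr : r ≠ r' := by
      intro hr; exact hne (by rw [hr])
    have : ((r, (i, hostSlot p)) : Idx p) ≠ (r', (i, hostSlot p)) := by
      intro hcon; exact hrr (Prod.ext_iff.1 hcon).1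
    exact propP (r, (i, hostSlot p)) (r', (i, hostSlot p)) rfl this (hu.trans (by rw [e1, ← hu']))
  have himg : (univ : Finset (ZMod p × ZMod p)).image (fun q => φ (q.1, (q.2, hostSlot p)))
      = Finset.range (p*p) := by
    apply Finset.eq_of_subset_of_card_le
    · intro x hx
      rw [mem_image] at hx
      obtain ⟨q, -, rfl⟩ := hx
      obtain ⟨u, hu⟩ := hcolhost q.1 q.2
      rw [hu]
      exact mem_range.2 (code_lt p u q.2)
    · rw [card_range, Finset.card_image_of_injOn (fun x hx y hy h => hginj x hx y hy h), card_univ]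
      simp [ZMod.card]
  have way1 : ∑ q : ZMod p × ZMod p, f (φ (q.1, (q.2, hostSlot p)))
      = ∑ x ∈ Finset.range (p*p), f x := by
    rw [← himg, Finset.sum_image hginj]
  -- sum over all colors is zero
  have hzero : ∑ x ∈ Finset.range (p*p), f x = 0 := by
    have hcodeinj : ∀ q ∈ (univ : Finset (ZMod p × ZMod p)), ∀ q' ∈ (univ : Finset (ZMod p × ZMod p)),
        code p q.1 q.2 = code p q'.1 q'.2 → q = q' := by
      rintro q - q' - h
      obtain ⟨e1, e2⟩ := code_inj p h
      exact Prod.ext e1 e2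
    have hcodeimg : (univ : Finset (ZMod p × ZMod p)).image (fun q => code p q.1 q.2)
        = Finset.range (p*p) := by
      apply Finset.eq_of_subset_of_card_le
      · intro x hx
        rw [mem_image] at hx
        obtain ⟨q, -, rfl⟩ := hx
        exact mem_range.2 (code_lt p q.1 q.2)
      · rw [card_range, Finset.card_image_of_injOn (fun x hx y hy h => hcodeinj x hx y hy h),
          card_univ]
        simp [ZMod.card]
    rw [← hcodeimg, Finset.sum_image hcodeinj]
    have hterm : ∀ q : ZMod p × ZMod p, f (code p q.1 q.2) = q.1 := fun q => hfcode q.1 q.2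
    rw [Finset.sum_congr rfl (fun q _ => hterm q), Fintype.sum_prod_type]
    have hconst : ∀ u : ZMod p, (∑ _i : ZMod p, u) = 0 := by
      intro u
      rw [Finset.sum_const, card_univ, ZMod.card, nsmul_eq_mul, ZMod.natCast_self, zero_mul]
    rw [Finset.sum_congr rfl (fun u _ => hconst u), Finset.sum_const_zero]
  -- line index per star
  have hsurjLine : ∀ r cc : ZMod p, ∃ i : ZMod p,
      f (φ (r, (i, hostSlot p))) - αz p r i = cc := by
    intro r cc
    by_contra hno
    push_neg at hno
    have hlcinj : ∀ j ∈ (univ : Finset (ZMod p)), ∀ j' ∈ (univ : Finset (ZMod p)),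
        code p (cc + αz p r j) j = code p (cc + αz p r j') j' → j = j' := by
      rintro j - j' - h
      exact (code_inj p h).2
    have hlccard : ((univ : Finset (ZMod p)).image (fun j => code p (cc + αz p r j) j)).card = p := by
      rw [Finset.card_image_of_injOn (fun x hx y hy h => hlcinj x hx y hy h), card_univ, ZMod.card]
    set lc : Finset ℕ := (univ : Finset (ZMod p)).image (fun j => code p (cc + αz p r j) j) with hlc
    set A : Finset (Idx p) := ((univ : Finset (Idx p)).filter (fun ι => ι.1 = r)).filter
      (fun ι => φ ι ∈ lc) with hA
    have hAsub : A ⊆ (univ : Finset (Idx p)).filter (fun ι => ι.1 = r) := Finset.filter_subset _ _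
    have himA : A.image φ = lc := by
      apply Finset.Subset.antisymm
      · intro x hx
        rw [mem_image] at hx
        obtain ⟨ι, hι, rfl⟩ := hx
        exact (mem_filter.1 hι).2
      · intro x hx
        have hxlt : x < p*p := by
          rw [hlc, mem_image] at hx
          obtain ⟨j, -, rfl⟩ := hx
          exact code_lt p _ _
        obtain ⟨ι, hι1, hι2⟩ := hsurj r x hxlt
        rw [mem_image]
        refine ⟨ι, ?_, hι2⟩
        rw [hA, mem_filter, mem_filter]
        exact ⟨⟨mem_univ _, hι1⟩, by rw [hι2]; exact hx⟩
    have hAcard : A.card = p := by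
      have := Finset.card_image_of_injOn ((hinjCr r).mono (by exact_mod_cast hAsub))
      rw [himA, hlccard] at this
      exact this.symm
    have hAB : ∀ ι ∈ A, ι.1 = r ∧ ι.2.1 = cc ∧ ι.2.2 ≠ hostSlot p := by
      intro ι hι
      have hι1 : ι.1 = r := (mem_filter.1 (hAsub hι)).2
      have hφ : φ ι ∈ lc := (mem_filter.1 hι).2
      rw [hlc, mem_image] at hφ
      obtain ⟨j, -, hj⟩ := hφ
      by_cases hh : ι.2.2 = hostSlot p
      · exfalso
        obtain ⟨u, hu⟩ := (mem_L'_host p hh).1 (hmem ι)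
        rw [hu] at hj
        obtain ⟨e1, e2⟩ := code_inj p hj.symm
        -- e1 : u = cc + αz p r j ; e2 : ι.2.1 = j
        have hιeq : ι = (r, (j, hostSlot p)) := by
          refine Prod.ext hι1 (Prod.ext e2 hh)
        apply hno j
        have : φ (r, (j, hostSlot p)) = code p u j := by
          rw [← hιeq, hu, e2]
        rw [this, hfcode, e1, add_sub_cancel_right]
      · refine ⟨hι1, ?_, hh⟩
        obtain ⟨i, hi⟩ := (mem_L'_core p hh).1 (hmem ι)
        rw [hi] at hj
        obtain ⟨e1, e2⟩ := code_inj p hj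
        -- e1 : cc + αz p r j = ι.2.1 + αz p ι.1 i ; e2 : j = i
        rw [hι1, ← e2] at e1
        exact (add_right_cancel e1).symm
    have hcard2 : A.card ≤ p - 1 := by
      have hb : A.card ≤ ((univ : Finset (Fin p)).erase (hostSlot p)).card := by
        apply Finset.card_le_card_of_injOn (fun ι => ι.2.2)
        · intro ι hι
          exact Finset.mem_erase.2 ⟨(hAB ι hι).2.2, mem_univ _⟩
        · intro ι hι κ hκ h
          have h' : ι.2.2 = κ.2.2 := h
          obtain ⟨a1, a2, -⟩ := hAB ι (Finset.mem_coe.1 hι)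
          obtain ⟨b1, b2, -⟩ := hAB κ (Finset.mem_coe.1 hκ)
          exact Prod.ext (a1.trans b1.symm) (Prod.ext (a2.trans b2.symm) h')
      rwa [Finset.card_erase_of_mem (mem_univ _), card_univ, Fintype.card_fin] at hb
    rw [hAcard] at hcard2
    have := NeZero.pos p
    omega
  -- per star sum
  have hstar : ∀ r : ZMod p, ∑ i : ZMod p, f (φ (r, (i, hostSlot p)))
      = (∑ x : ZMod p, x) + ∑ i : ZMod p, αz p r i := by
    intro r
    have h1 : ∀ i : ZMod p, f (φ (r, (i, hostSlot p)))
        = (f (φ (r, (i, hostSlot p))) - αz p r i) + αz p r i := by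
      intro i; rw [sub_add_cancel]
    rw [Finset.sum_congr rfl (fun i _ => h1 i), Finset.sum_add_distrib]
    congr 1
    have himg2 : (univ : Finset (ZMod p)).image (fun i => f (φ (r, (i, hostSlot p))) - αz p r i)
        = univ := by
      rw [Finset.eq_univ_iff_forall]
      intro cc
      obtain ⟨i, hi⟩ := hsurjLine r cc
      exact mem_image.2 ⟨i, mem_univ _, hi⟩
    have hinj2 : Set.InjOn (fun i => f (φ (r, (i, hostSlot p))) - αz p r i)
        ((univ : Finset (ZMod p)) : Set (ZMod p)) := by
      apply Finset.card_image_iff.1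
      rw [himg2]
    conv_rhs => rw [← himg2]
    rw [Finset.sum_image (fun x hx y hy h => hinj2 (by exact_mod_cast hx) (by exact_mod_cast hy) h)]
  -- the alpha sum
  have halpha : ∑ r : ZMod p, ∑ i : ZMod p, αz p r i = 1 := by
    have hin : ∀ r : ZMod p, ∑ i : ZMod p, αz p r i = if r = 0 then 1 else 0 := by
      intro r
      by_cases hr : r = 0
      · subst hr
        rw [if_pos rfl]
        have : ∀ i : ZMod p, αz p 0 i = if i = 0 then 1 else 0 := by
          intro i; simp [αz]
        rw [Finset.sum_congr rfl (fun i _ => this i)]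
        simp
      · rw [if_neg hr]
        have : ∀ i : ZMod p, αz p r i = 0 := by
          intro i; simp [αz, hr]
        rw [Finset.sum_congr rfl (fun i _ => this i)]
        simp
    rw [Finset.sum_congr rfl (fun r _ => hin r)]
    simp
  -- combine
  haveI : Nontrivial (ZMod p) := ZMod.nontrivial p
  have hTzero : ∑ _r : ZMod p, (∑ x : ZMod p, x) = 0 := by
    rw [Finset.sum_const, card_univ, ZMod.card, nsmul_eq_mul, ZMod.natCast_self, zero_mul]
  have final : (0 : ZMod p) = 1 := by
    calc (0 : ZMod p) = ∑ x ∈ Finset.range (p*p), f x := hzero.symm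
      _ = ∑ q : ZMod p × ZMod p, f (φ (q.1, (q.2, hostSlot p))) := way1.symm
      _ = ∑ r : ZMod p, ∑ i : ZMod p, f (φ (r, (i, hostSlot p))) := by
          rw [Fintype.sum_prod_type]
      _ = ∑ r : ZMod p, ((∑ x : ZMod p, x) + ∑ i : ZMod p, αz p r i) :=
          Finset.sum_congr rfl (fun r _ => hstar r)
      _ = (∑ _r : ZMod p, (∑ x : ZMod p, x)) + ∑ r : ZMod p, ∑ i : ZMod p, αz p r i :=
          Finset.sum_add_distrib
      _ = 0 + 1 := by rw [hTzero, halpha]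
      _ = 1 := zero_add 1
  exact zero_ne_one final

end Stmt10Aux


/-- For every `Δ ≥ 2` there are a bipartite simple graph `H` and a list assignment `L` for
its edges with maximum color degree `Δ`, all lists of size exactly `Δ`, and no proper
`L`-coloring. -/
theorem stmt10 (Δ : ℕ) (hΔ : 2 ≤ Δ) :
    ∃ (N M : ℕ) (E : Fin M → Finset (Fin N)) (L : Fin M → Finset ℕ),
      (∀ a, (E a).card = 2) ∧
      (∀ a b, a ≠ b → E a ≠ E b) ∧
      (∃ P : Fin N → Bool, ∀ a, ∀ u ∈ E a, ∀ v ∈ E a, u ≠ v → P u ≠ P v) ∧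
      (∀ (col : ℕ) (v : Fin N),
        (Finset.univ.filter fun a => col ∈ L a ∧ v ∈ E a).card ≤ Δ) ∧
      (∃ (col : ℕ) (v : Fin N),
        (Finset.univ.filter fun a => col ∈ L a ∧ v ∈ E a).card = Δ) ∧
      (∀ a, (L a).card = Δ) ∧
      ¬ ∃ φ : Fin M → ℕ, (∀ a, φ a ∈ L a) ∧
          ∀ a b : Fin M, a ≠ b → ¬ Disjoint (E a) (E b) → φ a ≠ φ b := by
  haveI : NeZero Δ := ⟨by omega⟩
  haveI : Fact (1 < Δ) := ⟨by omega⟩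
  classical
  let zE : ZMod Δ ≃ Fin Δ := Fintype.equivFinOfCardEq (ZMod.card Δ)
  let eV : Stmt10Aux.Vtx Δ ≃ Fin (Δ + Δ * Δ) :=
    (Equiv.sumCongr zE (Equiv.prodCongr zE (Equiv.refl (Fin Δ)))).trans
      ((Equiv.sumCongr (Equiv.refl (Fin Δ)) finProdFinEquiv).trans finSumFinEquiv)
  let eI : Stmt10Aux.Idx Δ ≃ Fin (Δ * (Δ * Δ)) :=
    (Equiv.prodCongr zE (Equiv.prodCongr zE (Equiv.refl (Fin Δ)))).trans
      ((Equiv.prodCongr (Equiv.refl (Fin Δ)) finProdFinEquiv).trans finProdFinEquiv)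
  refine ⟨Δ + Δ * Δ, Δ * (Δ * Δ),
    fun a => (Stmt10Aux.E' Δ (eI.symm a)).map eV.toEmbedding,
    fun a => Stmt10Aux.L' Δ (eI.symm a), ?_, ?_, ?_, ?_, ?_, ?_, ?_⟩
  · intro a
    rw [Finset.card_map]
    exact Stmt10Aux.E'_card Δ _
  · intro a b hab h
    apply hab
    have h1 := Finset.map_injective eV.toEmbedding h
    have h2 := Stmt10Aux.E'_injective Δ h1
    exact eI.symm.injective h2
  · refine ⟨fun v => (eV.symm v).isLeft, ?_⟩
    intro a u hu v hv huv
    rw [Finset.mem_map_equiv] at hu hv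
    rcases (Stmt10Aux.mem_E' Δ).1 hu with h1 | h1 <;>
      rcases (Stmt10Aux.mem_E' Δ).1 hv with h2 | h2
    · exact absurd (eV.symm.injective (h1.trans h2.symm)) huv
    · show (eV.symm u).isLeft ≠ (eV.symm v).isLeft
      rw [h1, h2]; simp
    · show (eV.symm u).isLeft ≠ (eV.symm v).isLeft
      rw [h1, h2]; simp
    · exact absurd (eV.symm.injective (h1.trans h2.symm)) huv
  · intro col v
    refine le_trans (le_of_eq ?_) (Stmt10Aux.cd_bound Δ col (eV.symm v))
    apply Finset.card_bij' (fun a _ => eI.symm a) (fun ι _ => eI ι)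
    · intro a ha
      simp only [mem_filter, mem_univ, true_and] at ha ⊢
      exact ⟨ha.1, (Finset.mem_map_equiv).1 ha.2⟩
    · intro ι hι
      simp only [mem_filter, mem_univ, true_and] at hι ⊢
      refine ⟨by simpa using hι.1, ?_⟩
      rw [Finset.mem_map_equiv]
      simpa using hι.2
    · intro a ha; simp
    · intro ι hι; simp
  · refine ⟨Stmt10Aux.code Δ 0 0, eV (Sum.inr ((0 : ZMod Δ), Stmt10Aux.hostSlot Δ)), ?_⟩
    refine Eq.trans ?_ (Stmt10Aux.cd_eq Δ)
    apply Finset.card_bij' (fun a _ => eI.symm a) (fun ι _ => eI ι)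
    · intro a ha
      simp only [mem_filter, mem_univ, true_and] at ha ⊢
      refine ⟨ha.1, ?_⟩
      have := (Finset.mem_map_equiv).1 ha.2
      simpa using this
    · intro ι hι
      simp only [mem_filter, mem_univ, true_and] at hι ⊢
      refine ⟨by simpa using hι.1, ?_⟩
      rw [Finset.mem_map_equiv]
      simpa using hι.2
    · intro a ha; simp
    · intro ι hι; simp
  · intro a
    exact Stmt10Aux.L'_card Δ _
  · rintro ⟨φ, hmem, hprop⟩
    apply Stmt10Aux.no_coloring Δ (fun ι => φ (eI ι))
    · intro ι
      simpa using hmem (eI ι)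
    · intro ι κ hne hdisj
      refine hprop (eI ι) (eI κ) (fun h => hne (eI.injective h)) ?_
      rw [Finset.not_disjoint_iff]
      obtain ⟨w, hw1, hw2⟩ := Finset.not_disjoint_iff.1 hdisj
      refine ⟨eV w, ?_, ?_⟩
      · simp only [Equiv.symm_apply_apply]
        exact Finset.mem_map_of_mem _ hw1
      · simp only [Equiv.symm_apply_apply]
        exact Finset.mem_map_of_mem _ hw2
end

section
/- Let G and H be multi-hypergraphs on disjoint vertex sets, let P = {E_1, …, E_m} be the color classes of an edge-coloring of G, and let Q = {F_1, …, F_n} be the color classes of an edge-coloring of H. Let R = {E_1', …, E_m', F_1, …, F_{n−1}} be the color classes of an edge-coloring of the disjoint union G ∪ H, where E_1' ⊇ E_1, …, E_m' ⊇ E_m are obtained by distributing each edge of F_n into one of the classes E_1, …, E_m arbitrarily. If G has no full rainbow matching with respect to P and H has no full rainbow matching with respect to Q, then G ∪ H has no full rainbow matching with respect to R. -/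
open Finset

/-- The joining lemma: given edge-colored multi-hypergraphs `G` (with `m` classes) and `H`
(with `n + 1` classes), neither having a full rainbow matching, the disjoint union `G ∪ H`,
colored by keeping the classes of `G` and the first `n` classes of `H` and distributing the
edges of the last class of `H` among the classes of `G` (via `d`), has no full rainbow
matching. -/
theorem stmt11 {VG VH ιG ιH : Type} (m n : ℕ)
    (EG : ιG → Finset VG) (EH : ιH → Finset VH)
    (hneG : ∀ a, (EG a).Nonempty) (hneH : ∀ b, (EH b).Nonempty)
    (cG : ιG → Fin m) (cH : ιH → Fin (n + 1))
    (d : ιH → Fin m)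
    (hG : ¬ hasFullRainbowMatching EG cG)
    (hH : ¬ hasFullRainbowMatching EH cH) :
    ¬ hasFullRainbowMatching
      (Sum.elim
        (fun a => (EG a).map ⟨Sum.inl, Sum.inl_injective⟩)
        (fun b => (EH b).map ⟨Sum.inr, Sum.inr_injective⟩) :
        ιG ⊕ ιH → Finset (VG ⊕ VH))
      (Sum.elim
        (fun a => (Sum.inl (cG a) : Fin m ⊕ Fin n))
        (fun b => if h : (cH b : ℕ) < n then Sum.inr ⟨cH b, h⟩ else Sum.inl (d b))) := by

  rintro ⟨f, hc, hd⟩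
  by_cases hcase : ∀ i : Fin m, ∃ a : ιG, f (Sum.inl i) = Sum.inl a
  · -- G would have a full rainbow matching
    choose g hg using hcase
    apply hG
    refine ⟨g, fun i => ?_, fun i j hij => ?_⟩
    · have := hc (Sum.inl i)
      rw [hg i] at this
      simpa using this
    · have h2 := hd (Sum.inl i) (Sum.inl j) (by simpa using hij)
      rw [hg i, hg j] at h2
      exact (Finset.disjoint_map _).mp h2
  · push_neg at hcase
    obtain ⟨i, hi⟩ := hcase
    obtain ⟨b, hb⟩ : ∃ b, f (Sum.inl i) = Sum.inr b := by
      cases hf : f (Sum.inl i) with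
      | inl a => exact absurd hf (hi a)
      | inr b => exact ⟨b, rfl⟩
    have hbn : (cH b : ℕ) = n := by
      have := hc (Sum.inl i)
      rw [hb] at this
      simp only [Sum.elim_inr] at this
      by_contra h
      have hlt : (cH b : ℕ) < n := lt_of_le_of_ne (Nat.lt_succ_iff.mp (cH b).isLt) h
      rw [dif_pos hlt] at this
      exact absurd this (by simp)
    have hmain : ∀ j : Fin n, ∃ bj : ιH, f (Sum.inr j) = Sum.inr bj ∧ (cH bj : ℕ) = (j : ℕ) := by
      intro j
      cases hf : f (Sum.inr j) with
      | inl a =>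
        have := hc (Sum.inr j); rw [hf] at this; simp at this
      | inr bj =>
        refine ⟨bj, rfl, ?_⟩
        have := hc (Sum.inr j); rw [hf] at this
        simp only [Sum.elim_inr] at this
        by_cases hlt : (cH bj : ℕ) < n
        · rw [dif_pos hlt] at this
          have := Sum.inr_injective this
          exact congrArg Fin.val this
        · rw [dif_neg hlt] at this; exact absurd this (by simp)
    choose bf hbf1 hbf2 using hmain
    apply hH
    refine ⟨fun k => if h : (k : ℕ) < n then bf ⟨k, h⟩ else b, fun k => ?_, fun k k' hkk' => ?_⟩
    · by_cases h : (k : ℕ) < n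
      · simp only [dif_pos h]
        exact Fin.ext (hbf2 ⟨k, h⟩)
      · simp only [dif_neg h]
        have : (k : ℕ) = n := le_antisymm (Nat.lt_succ_iff.mp k.isLt) (le_of_not_gt h)
        exact Fin.ext (hbn.trans this.symm)
    · -- disjointness
      have key : ∀ p q : Fin m ⊕ Fin n, ∀ b1 b2 : ιH, p ≠ q →
          f p = Sum.inr b1 → f q = Sum.inr b2 → Disjoint (EH b1) (EH b2) := by
        intro p q b1 b2 hpq h1 h2
        have := hd p q hpq
        rw [h1, h2] at this
        exact (Finset.disjoint_map _).mp this
      by_cases h : (k : ℕ) < n <;> by_cases h' : (k' : ℕ) < n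
      · simp only [dif_pos h, dif_pos h']
        refine key (Sum.inr ⟨k, h⟩) (Sum.inr ⟨k', h'⟩) _ _ ?_ (hbf1 _) (hbf1 _)
        simp only [ne_eq, Sum.inr.injEq]
        intro he
        have h2 : (k : ℕ) = (k' : ℕ) := by simpa [Fin.mk.injEq] using he
        exact hkk' (Fin.ext h2)
      · simp only [dif_pos h, dif_neg h']
        exact key (Sum.inr ⟨k, h⟩) (Sum.inl i) _ _ (by simp) (hbf1 _) hb
      · simp only [dif_neg h, dif_pos h']
        exact key (Sum.inl i) (Sum.inr ⟨k', h'⟩) _ _ (by simp) hb (hbf1 _)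
      · exfalso
        apply hkk'
        have hk : (k : ℕ) = n := le_antisymm (Nat.lt_succ_iff.mp k.isLt) (le_of_not_gt h)
        have hk' : (k' : ℕ) = n := le_antisymm (Nat.lt_succ_iff.mp k'.isLt) (le_of_not_gt h')
        exact Fin.ext (hk.trans hk'.symm)
end

section
/- Let H be a multi-hypergraph and let Q = {F_1, …, F_m} be the color classes of an edge-coloring of H such that H has no full rainbow matching with respect to Q. Suppose the integer q ≥ 1 satisfies Σ_{i∈I} |F_i| ≥ q(|I| − 1) + 1 for every subset I ⊆ {1,…,m}. Then there exist an integer k ≥ 1 and an edge-coloring of the multi-hypergraph H^k (the disjoint union of k copies of H) into color classes E_1, …, E_{k(m−1)+1} such that |E_i| ≥ q for every i and H^k has no full rainbow matching with respect to E_1, …, E_{k(m−1)+1}. -/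
open Finset

namespace Stmt12
variable {ι : Type} [Fintype ι] [DecidableEq ι]
section Defs
variable {m : ℕ} (q : ℕ) (cH : ι → Fin m)
def cell (i : Fin m) : Finset ι := Finset.univ.filter (fun a => cH a = i)
def w (i : ℕ) : ℕ := if h : i < m then (cell cH ⟨i, h⟩).card else 0
def rr (d ε : ℕ) : ℕ := (d+1) - w cH ε
def RR (d j : ℕ) : ℕ := ∑ δ ∈ Finset.range j, rr cH d δ
def downAux (hm : 0 < m) : (d : ℕ) → (g : ℕ → Fin m) → (ε : ℕ) → (p : ℕ) → (Fin q → Fin m)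
  | d, g, ε, p =>
    if hd : d < q then
      if hε : ε < m - 1 then
        if p < rr cH d ε then
          downAux hm (d+1) (Function.update g d ⟨ε, by omega⟩) 0 (w cH ε + p)
        else downAux hm d g (ε+1) (p - rr cH d ε)
      else downAux hm (d+1) (Function.update g d ⟨m-1, by omega⟩) 0 (w cH (m-1) + p)
    else fun i => g i
  termination_by d g ε p => (q - d, m - ε)
  decreasing_by
    · exact Prod.Lex.left _ _ (by omega)
    · exact Prod.Lex.right _ (by omega)
    · exact Prod.Lex.left _ _ (by omega)

def down (hm : 0 < m) (d : ℕ) (g : ℕ → Fin m) (p : ℕ) : Fin q → Fin m :=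
  downAux q cH hm d g 0 p

def len : (d : ℕ) → (g : ℕ → Fin m) → ℕ
  | 0, _ => 0
  | (d+1), g =>
    w cH (g d) + (if (g d : ℕ) = m - 1 then len d g - RR cH d (m-1) else rr cH d (g d))

theorem downAux_ext (hm : 0 < m) (d : ℕ) (g : ℕ → Fin m) (ε : ℕ) (p : ℕ) (i : Fin q)
    (hi : (i : ℕ) < d) : downAux q cH hm d g ε p i = g i := by
  induction d, g, ε, p using downAux.induct q cH hm with
  | case1 d g ε p hd hε hp ih =>
      rw [downAux]
      simp only [hd, hε, hp, dite_true, if_true, dif_pos]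
      rw [ih (by omega)]
      exact Function.update_of_ne (by omega) _ _
  | case2 d g ε p hd hε hp ih =>
      rw [downAux]
      simp only [hd, hε, hp, dif_pos, if_neg, dite_true]
      exact ih hi
  | case3 d g ε p hd hε ih =>
      rw [downAux]
      simp only [hd, hε, dif_pos, dite_false]
      rw [ih (by omega)]
      exact Function.update_of_ne (by omega) _ _
  | case4 d g ε p hd =>
      rw [downAux]
      simp only [hd, dite_false]

theorem downAux_congr (hm : 0 < m) (d : ℕ) (g : ℕ → Fin m) (ε : ℕ) (p : ℕ) :
    ∀ g' : ℕ → Fin m, (∀ i, i < d → g i = g' i) →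
      downAux q cH hm d g ε p = downAux q cH hm d g' ε p := by
  induction d, g, ε, p using downAux.induct q cH hm with
  | case1 d g ε p hd hε hp ih =>
      intro g' hag
      rw [downAux]; conv_rhs => rw [downAux]
      simp only [hd, hε, hp, dite_true, if_true, dif_pos]
      exact ih _ (by
        intro i hi
        rcases Nat.lt_or_ge i d with h | h
        · simp only [Function.update_of_ne (by omega : i ≠ d)]; exact hag i h
        · have : i = d := by omega
          subst this; simp)
  | case2 d g ε p hd hε hp ih =>
      intro g' hag
      rw [downAux]; conv_rhs => rw [downAux]
      simp only [hd, hε, hp, dif_pos, if_neg, dite_true]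
      exact ih _ hag
  | case3 d g ε p hd hε ih =>
      intro g' hag
      rw [downAux]; conv_rhs => rw [downAux]
      simp only [hd, hε, dif_pos, dite_false]
      exact ih _ (by
        intro i hi
        rcases Nat.lt_or_ge i d with h | h
        · simp only [Function.update_of_ne (by omega : i ≠ d)]; exact hag i h
        · have : i = d := by omega
          subst this; simp)
  | case4 d g ε p hd =>
      intro g' hag
      rw [downAux]; conv_rhs => rw [downAux]
      simp only [hd, dite_false]
      exact funext fun i => hag i (by omega)

/-- peeling one chunk -/
theorem downAux_peel (hm : 0 < m) (d : ℕ) (g : ℕ → Fin m) (ε : ℕ) (y : ℕ)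
    (hε : ε < m - 1) :
    downAux q cH hm d g ε (rr cH d ε + y) = downAux q cH hm d g (ε+1) y := by
  by_cases hd : d < q
  · rw [downAux]
    simp only [hd, hε, dite_true, dif_pos, if_neg (by omega : ¬ rr cH d ε + y < rr cH d ε)]
    have hyy : rr cH d ε + y - rr cH d ε = y := by omega
    rw [hyy]
  · rw [downAux]; conv_rhs => rw [downAux]
    simp only [hd, dite_false]

theorem downAux_peel_many (hm : 0 < m) (d : ℕ) (g : ℕ → Fin m) :
    ∀ j, j ≤ m - 1 → ∀ ε, ε ≤ j → ∀ x,
      downAux q cH hm d g ε ((∑ δ ∈ Finset.Ico ε j, rr cH d δ) + x)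
        = downAux q cH hm d g j x := by
  intro j hj
  induction j with
  | zero => intro ε hε x; interval_cases ε; simp
  | succ n ih =>
      intro ε hε x
      rcases Nat.lt_or_ge ε (n+1) with h | h
      · have hεn : ε ≤ n := by omega
        have hsum : (∑ δ ∈ Finset.Ico ε (n+1), rr cH d δ)
            = (∑ δ ∈ Finset.Ico ε n, rr cH d δ) + rr cH d n := by
          rw [Finset.sum_Ico_succ_top hεn]
        rw [hsum]
        have := ih (by omega) ε hεn (rr cH d n + x)
        rw [add_assoc]
        rw [this]
        exact downAux_peel q cH hm d g n x (by omega)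
      · have : ε = n+1 := by omega
        subst this; simp

/-- the key forwarding identity: an incoming position `RR d (g d) + x` of the node at depth `d`
is routed to the node at depth `d+1` (along `g`) at position `w (g d) + x`. -/
theorem down_forward (hm : 0 < m) (d : ℕ) (g : ℕ → Fin m) (x : ℕ)
    (hx : x < rr cH d (g d) ∨ ((g d : ℕ) = m - 1)) :
    down q cH hm d g (RR cH d (g d) + x) = down q cH hm (d+1) g (w cH (g d) + x) := by
  have hgd : ((g d : ℕ)) < m := (g d).isLt
  unfold down
  have hper : downAux q cH hm d g 0 (RR cH d ↑(g d) + x) = downAux q cH hm d g ((g d : ℕ)) x := by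
    have := downAux_peel_many q cH hm d g ((g d : ℕ)) (by omega) 0 (by omega) x
    rw [← this, RR, Finset.range_eq_Ico]
  rw [hper]
  by_cases hd : d < q
  · by_cases hlast : ((g d : ℕ)) = m - 1
    · rw [downAux]
      rw [dif_pos hd, dif_neg (by omega : ¬ ((g d : ℕ) < m - 1))]
      have h1 : (⟨m-1, by omega⟩ : Fin m) = g d := Fin.ext (by simp [hlast.symm])
      rw [h1, Function.update_eq_self]
      rw [← hlast]
    · have hx' : x < rr cH d (g d) := hx.resolve_right hlast
      rw [downAux]
      rw [dif_pos hd, dif_pos (by omega : ((g d:ℕ) < m - 1)), if_pos hx']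
      have h1 : (⟨(g d : ℕ), by omega⟩ : Fin m) = g d := Fin.ext rfl
      rw [h1, Function.update_eq_self]
  · rw [downAux]; conv_rhs => rw [downAux]
    rw [dif_neg hd, dif_neg (by omega : ¬ (d+1 < q))]

theorem down_leaf (hm : 0 < m) (g : ℕ → Fin m) (p : ℕ) :
    down q cH hm q g p = fun i : Fin q => g (i : ℕ) := by
  unfold down; rw [downAux]; simp

theorem RR_succ (d j : ℕ) : RR cH d (j+1) = RR cH d j + rr cH d j := by
  unfold RR; rw [Finset.sum_range_succ]

theorem len_ge (hs : ∀ d, d + 1 ≤ q → RR cH d m ≤ d) :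
    ∀ d, d ≤ q → ∀ g : ℕ → Fin m, d ≤ len cH d g := by
  intro d
  induction d with
  | zero => intro _ _; omega
  | succ d ih =>
      intro hdq g
      have hlen : d ≤ len cH d g := ih (by omega) g
      have hsd : RR cH d m ≤ d := hs d hdq
      have hgd : ((g d : ℕ)) < m := (g d).isLt
      have hwr : d + 1 ≤ w cH (g d) + rr cH d (g d) := by
        unfold rr; omega
      rw [len]
      by_cases h : ((g d : ℕ)) = m - 1
      · simp only [h, if_true]
        have hm' : 0 < m := Nat.lt_of_le_of_lt (Nat.zero_le _) hgd
        have hmm : m - 1 + 1 = m := by omega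
        have h1 : RR cH d (m-1) + rr cH d (m-1) = RR cH d m := by
          rw [← RR_succ, hmm]
        rw [h] at hwr
        omega
      · simp only [h, if_false]
        exact hwr

/-- membership chunk bound : `RR` is monotone and bounded by the total -/
theorem RR_le (d : ℕ) (j j' : ℕ) (h : j ≤ j') : RR cH d j ≤ RR cH d j' := by
  unfold RR
  exact Finset.sum_le_sum_of_subset (Finset.range_subset_range.mpr h)



noncomputable def unrank (a₀ : ι) (i : Fin m) (p : ℕ) : ι := ((cell cH i).toList).getD p a₀

noncomputable def rankIn (i : Fin m) (a : ι) : ℕ := ((cell cH i).toList).idxOf a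

theorem toList_len (i : Fin m) : ((cell cH i).toList).length = w cH (i : ℕ) := by
  rw [Finset.length_toList]
  unfold w
  rw [dif_pos i.isLt]

theorem unrank_mem (a₀ : ι) (i : Fin m) (p : ℕ) (hp : p < w cH (i : ℕ)) :
    cH (unrank cH a₀ i p) = i := by
  have hp' : p < ((cell cH i).toList).length := by rw [toList_len]; exact hp
  unfold unrank
  rw [List.getD_eq_getElem _ _ hp']
  have hmem : ((cell cH i).toList)[p] ∈ (cell cH i).toList := List.getElem_mem _
  rw [Finset.mem_toList] at hmem
  exact (Finset.mem_filter.mp hmem).2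

theorem rank_unrank (a₀ : ι) (i : Fin m) (p : ℕ) (hp : p < w cH (i : ℕ)) :
    rankIn cH i (unrank cH a₀ i p) = p := by
  have hp' : p < ((cell cH i).toList).length := by rw [toList_len]; exact hp
  unfold rankIn unrank
  rw [List.getD_eq_getElem _ _ hp']
  exact List.Nodup.idxOf_getElem ((cell cH i).nodup_toList) p hp'

theorem unrank_inj (a₀ : ι) (i : Fin m) (p p' : ℕ) (hp : p < w cH (i : ℕ))
    (hp' : p' < w cH (i : ℕ)) (h : unrank cH a₀ i p = unrank cH a₀ i p') : p = p' := by
  have h1 := rank_unrank cH a₀ i p hp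
  have h2 := rank_unrank cH a₀ i p' hp'
  rw [← h1, ← h2, h]

end Defs

abbrev Cop (q m : ℕ) := Σ d : Fin q, (Fin (d : ℕ) → Fin m)

section Defs2
variable {m : ℕ} (q : ℕ) (cH : ι → Fin m)

def pad {q : ℕ} (hm : 0 < m) (v : Cop q m) : ℕ → Fin m :=
  fun i => if h : i < (v.1 : ℕ) then v.2 ⟨i, h⟩ else ⟨0, hm⟩

noncomputable def classOf (hm : 0 < m) (v : Cop q m) (a : ι) : Fin q → Fin m :=
  down q cH hm ((v.1 : ℕ)+1) (Function.update (pad hm v) (v.1 : ℕ) (cH a)) (rankIn cH (cH a) a)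

theorem classOf_ext1 (hm : 0 < m) (v : Cop q m) (a : ι) (i : Fin q) (hi : (i : ℕ) < (v.1 : ℕ)) :
    classOf q cH hm v a i = v.2 ⟨(i : ℕ), hi⟩ := by
  unfold classOf down
  rw [downAux_ext q cH hm _ _ _ _ i (by omega)]
  rw [Function.update_of_ne (by omega)]
  unfold pad
  rw [dif_pos hi]

theorem classOf_ext2 (hm : 0 < m) (v : Cop q m) (a : ι) (i : Fin q) (hi : (i : ℕ) = (v.1 : ℕ)) :
    classOf q cH hm v a i = cH a := by
  unfold classOf down
  rw [downAux_ext q cH hm _ _ _ _ i (by omega)]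
  rw [hi, Function.update_self]

noncomputable def back (hm : 0 < m) (a₀ : ι) : (d : ℕ) → (g : ℕ → Fin m) → (p : ℕ) → Option (Cop q m × ι)
  | 0, _, _ => none
  | (d+1), g, p =>
      if hd : d < q then
        if p < w cH (g d) then some (⟨⟨d, hd⟩, fun i => g (i : ℕ)⟩, unrank cH a₀ (g d) p)
        else back hm a₀ d g (RR cH d (g d) + (p - w cH (g d)))
      else none
  termination_by structural d => d

theorem back_zero (hm : 0 < m) (a₀ : ι) (g : ℕ → Fin m) (p : ℕ) :
    back q cH hm a₀ 0 g p = none := rfl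

theorem back_succ (hm : 0 < m) (a₀ : ι) (d : ℕ) (g : ℕ → Fin m) (p : ℕ) :
    back q cH hm a₀ (d+1) g p =
      if hd : d < q then
        if p < w cH (g d) then some (⟨⟨d, hd⟩, fun i => g (i : ℕ)⟩, unrank cH a₀ (g d) p)
        else back q cH hm a₀ d g (RR cH d (g d) + (p - w cH (g d)))
      else none := rfl

theorem classOf_eval (hm : 0 < m) (d : ℕ) (hd : d < q) (f : Fin d → Fin m) (a : ι) :
    classOf q cH hm ⟨⟨d, hd⟩, f⟩ a =
      down q cH hm (d+1) (Function.update (pad hm ⟨⟨d, hd⟩, f⟩) d (cH a))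
        (rankIn cH (cH a) a) := rfl

theorem pad_eval (hm : 0 < m) (d : ℕ) (hd : d < q) (f : Fin d → Fin m) (i : ℕ) :
    pad (q := q) hm ⟨⟨d, hd⟩, f⟩ i = if h : i < d then f ⟨i, h⟩ else ⟨0, hm⟩ := rfl


theorem pad_lt {q : ℕ} (hm : 0 < m) (v : Cop q m) (i : ℕ) (hi : i < (v.1 : ℕ)) :
    pad (q := q) hm v i = v.2 ⟨i, hi⟩ := dif_pos hi

theorem pad_ge {q : ℕ} (hm : 0 < m) (v : Cop q m) (i : ℕ) (hi : ¬ i < (v.1 : ℕ)) :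
    pad (q := q) hm v i = ⟨0, hm⟩ := dif_neg hi

theorem Cop_ext {q : ℕ} (hm : 0 < m) {v u : Cop q m} (h1 : (v.1 : ℕ) = (u.1 : ℕ))
    (h2 : ∀ i : ℕ, pad (q := q) hm v i = pad (q := q) hm u i) : v = u := by
  rcases v with ⟨⟨dv, hv⟩, fv⟩
  rcases u with ⟨⟨du, hu⟩, fu⟩
  simp only at h1
  subst h1
  have : fv = fu := by
    funext i
    have := h2 (i : ℕ)
    rw [pad_eval, pad_eval, dif_pos i.isLt, dif_pos i.isLt] at this
    simpa using this
  subst this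
  rfl

theorem back_depth (hm : 0 < m) (a₀ : ι) :
    ∀ d (g : ℕ → Fin m) p v a, back q cH hm a₀ d g p = some (v, a) → (v.1 : ℕ) < d := by
  intro d
  induction d with
  | zero => intro g p v a h; rw [back_zero] at h; exact absurd h (by simp)
  | succ d ih =>
      intro g p v a h
      rw [back_succ] at h
      by_cases hd : d < q
      · rw [dif_pos hd] at h
        by_cases hp : p < w cH (g d)
        · rw [if_pos hp] at h
          obtain ⟨h1, h2⟩ := Prod.mk.injEq _ _ _ _ |>.mp (Option.some.inj h)
          rw [← h1]
          exact Nat.lt_succ_self d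
        · rw [if_neg hp] at h
          have := ih _ _ _ _ h
          omega
      · rw [dif_neg hd] at h
        exact absurd h (by simp)

theorem back_bound (hs : ∀ d, d + 1 ≤ q → RR cH d m ≤ d) (d : ℕ) (hd : d + 1 ≤ q)
    (g : ℕ → Fin m) (p : ℕ) (hp : p < len cH (d+1) g) (hnp : ¬ p < w cH (g d)) :
    RR cH d (g d) + (p - w cH (g d)) < len cH d g := by
  have hlen : d ≤ len cH d g := len_ge q cH hs d (by omega) g
  have hsd : RR cH d m ≤ d := hs d hd
  have hgd : ((g d : ℕ)) < m := (g d).isLt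
  rw [len] at hp
  by_cases h : ((g d : ℕ)) = m - 1
  · rw [h, if_pos rfl] at hp
    rw [h] at hnp ⊢
    have hRm : RR cH d (m-1) ≤ RR cH d m := RR_le cH d _ _ (by omega)
    omega
  · rw [if_neg h] at hp
    have h1 : RR cH d ((g d : ℕ)) + rr cH d ((g d : ℕ)) = RR cH d ((g d : ℕ) + 1) :=
      (RR_succ cH d _).symm
    have h2 : RR cH d ((g d : ℕ) + 1) ≤ RR cH d m := RR_le cH d _ _ (by omega)
    omega

theorem back_spec (hm : 0 < m) (a₀ : ι) (hs : ∀ d, d + 1 ≤ q → RR cH d m ≤ d) :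
    ∀ d, d ≤ q → ∀ (g : ℕ → Fin m) p, p < len cH d g →
      ∃ v a, back q cH hm a₀ d g p = some (v, a) ∧
        classOf q cH hm v a = down q cH hm d g p := by
  intro d
  induction d with
  | zero => intro _ g p hp; rw [len] at hp; omega
  | succ d ih =>
      intro hdq g p hp
      have hd : d < q := by omega
      by_cases hcell : p < w cH (g d)
      · refine ⟨⟨⟨d, hd⟩, fun i => g (i : ℕ)⟩, unrank cH a₀ (g d) p, ?_, ?_⟩
        · rw [back_succ, dif_pos hd, if_pos hcell]
        · have hca : cH (unrank cH a₀ (g d) p) = g d := unrank_mem cH a₀ (g d) p hcell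
          rw [classOf_eval]
          rw [hca, rank_unrank cH a₀ (g d) p hcell]
          unfold down
          exact downAux_congr q cH hm (d+1) _ 0 p g (by
            intro i hi
            rcases Nat.lt_or_ge i d with h' | h'
            · rw [Function.update_of_ne (by omega), pad_eval, dif_pos h']
            · have : i = d := by omega
              subst this
              simp)
      · have hb := back_bound q cH hs d hdq g p hp hcell
        obtain ⟨v, a, hba, hcl⟩ := ih (by omega) g _ hb
        refine ⟨v, a, ?_, ?_⟩
        · rw [back_succ, dif_pos hd, if_neg hcell]
          exact hba
        · rw [hcl]
          have hfwd := down_forward q cH hm d g (p - w cH (g d)) ?_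
          · have hxx : w cH (g d) + (p - w cH (g d)) = p := by omega
            rw [hxx] at hfwd
            exact hfwd
          · rw [len] at hp
            by_cases h : ((g d : ℕ)) = m - 1
            · right; exact h
            · left; rw [if_neg h] at hp; omega

theorem back_inj (hm : 0 < m) (a₀ : ι) (hs : ∀ d, d + 1 ≤ q → RR cH d m ≤ d) :
    ∀ d, d ≤ q → ∀ (g : ℕ → Fin m) p p', p < len cH d g → p' < len cH d g →
      back q cH hm a₀ d g p = back q cH hm a₀ d g p' → p = p' := by
  intro d
  induction d with
  | zero => intro _ g p p' hp _ _; rw [len] at hp; omega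
  | succ d ih =>
      intro hdq g p p' hp hp' heq
      have hd : d < q := by omega
      rw [back_succ, dif_pos hd] at heq
      conv_rhs at heq => rw [back_succ, dif_pos hd]
      by_cases h1 : p < w cH (g d) <;> by_cases h2 : p' < w cH (g d)
      · rw [if_pos h1, if_pos h2] at heq
        have := Option.some.inj heq
        have h3 : unrank cH a₀ (g d) p = unrank cH a₀ (g d) p' := congrArg Prod.snd this
        exact unrank_inj cH a₀ (g d) p p' h1 h2 h3
      · rw [if_pos h1, if_neg h2] at heq
        rcases hback : back q cH hm a₀ d g (RR cH d (g d) + (p' - w cH (g d))) with _ | va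
        · rw [hback] at heq; exact absurd heq (by simp)
        · rw [hback] at heq
          have hdep := back_depth q cH hm a₀ d g _ va.1 va.2 (by rw [hback])
          have h5 := Option.some.inj heq
          have h4 : va.1 = ⟨⟨d, hd⟩, fun i => g (i : ℕ)⟩ := by
            rw [← h5]
          rw [h4] at hdep
          exact absurd hdep (by simp)
      · rw [if_neg h1, if_pos h2] at heq
        rcases hback : back q cH hm a₀ d g (RR cH d (g d) + (p - w cH (g d))) with _ | va
        · rw [hback] at heq; exact absurd heq (by simp)
        · rw [hback] at heq
          have hdep := back_depth q cH hm a₀ d g _ va.1 va.2 (by rw [hback])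
          have h5 := Option.some.inj heq
          have h4 : va.1 = ⟨⟨d, hd⟩, fun i => g (i : ℕ)⟩ := by
            rw [h5]
          rw [h4] at hdep
          exact absurd hdep (by simp)
      · rw [if_neg h1, if_neg h2] at heq
        have hb1 := back_bound q cH hs d hdq g p hp h1
        have hb2 := back_bound q cH hs d hdq g p' hp' h2
        have := ih (by omega) g _ _ hb1 hb2 heq
        omega

end Defs2

section Main
variable {m : ℕ} (q : ℕ) (cH : ι → Fin m)

theorem w_coe (ε : Fin m) : w cH ((ε : ℕ)) = classSize cH ε := by
  unfold w
  rw [dif_pos ε.isLt]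
  rfl

end Main
end Stmt12

set_option maxHeartbeats 2000000 in
/-- If `H` has an edge-coloring into `m` classes with no full rainbow matching and
`Σ_{i ∈ I} |F_i| ≥ q(|I|-1)+1` for every `I`, then some disjoint union `H^k` of `k ≥ 1`
copies of `H` has an edge-coloring into `k(m-1)+1` classes, each of size at least `q`,
with no full rainbow matching. -/
theorem stmt12 {VH ιH : Type} [Fintype ιH] [DecidableEq ιH]
    (m q : ℕ) (hq : 1 ≤ q)
    (EH : ιH → Finset VH) (hne : ∀ a, (EH a).Nonempty)
    (cH : ιH → Fin m)
    (hH : ¬ hasFullRainbowMatching EH cH)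
    (hsum : ∀ I : Finset (Fin m),
      (q : ℤ) * ((I.card : ℤ) - 1) + 1 ≤ ∑ i ∈ I, (classSize cH i : ℤ)) :
    ∃ k : ℕ, 1 ≤ k ∧
      ∃ c : Fin k × ιH → Fin (k * (m - 1) + 1),
        (∀ i, q ≤ classSize c i) ∧
        ¬ hasFullRainbowMatching
          (fun p : Fin k × ιH =>
            (EH p.2).map ⟨fun v => (p.1, v), fun x y h => by simpa using h⟩) c := by

  classical
  rcases Nat.eq_zero_or_pos m with hm0 | hm
  · subst hm0
    exact absurd ⟨Fin.elim0, fun i => i.elim0, fun i _ _ => i.elim0⟩ hH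
  -- main case : m ≥ 1
  -- nonempty ιH
  have hcs0 : 1 ≤ classSize cH ⟨0, hm⟩ := by
    have := hsum {⟨0, hm⟩}
    simp at this
    omega
  have hι : ∃ a : ιH, True := by
    by_contra hno
    push_neg at hno
    have : classSize cH ⟨0, hm⟩ = 0 := by
      unfold classSize
      rw [Finset.card_eq_zero]
      ext a
      exact (hno a).elim
    omega
  obtain ⟨a₀, -⟩ := hι
  -- the numeric key
  have hkey : ∀ p : ℕ, 1 ≤ p → p ≤ q →
      (∑ δ ∈ Finset.range m, (p - Stmt12.w cH δ)) ≤ p - 1 := by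
    intro p hp1 hpq
    have h1 : (∑ δ ∈ Finset.range m, (p - Stmt12.w cH δ))
        = ∑ ε : Fin m, (p - classSize cH ε) := by
      rw [← Fin.sum_univ_eq_sum_range (fun δ => p - Stmt12.w cH δ) m]
      exact Finset.sum_congr rfl fun ε _ => by rw [Stmt12.w_coe]
    rw [h1]
    set P : Finset (Fin m) := Finset.univ.filter (fun ε => classSize cH ε < p) with hP
    have h2 : ∑ ε : Fin m, (p - classSize cH ε) = ∑ ε ∈ P, (p - classSize cH ε) := by
      symm
      apply Finset.sum_subset (Finset.subset_univ P)
      intro x _ hx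
      rw [hP] at hx
      simp at hx
      omega
    rw [h2]
    rcases Nat.eq_zero_or_pos P.card with hPc | hPc
    · rw [Finset.card_eq_zero] at hPc
      rw [hPc]
      simp
    · -- cast to ℤ
      have hcast : ((∑ ε ∈ P, (p - classSize cH ε) : ℕ) : ℤ)
          = ∑ ε ∈ P, ((p : ℤ) - (classSize cH ε : ℤ)) := by
        rw [Nat.cast_sum]
        apply Finset.sum_congr rfl
        intro x hx
        rw [hP] at hx
        simp at hx
        rw [Nat.cast_sub (by omega)]
      have hsumP := hsum P
      have h3 : (∑ ε ∈ P, ((p : ℤ) - (classSize cH ε : ℤ)))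
          = (p : ℤ) * P.card - ∑ ε ∈ P, (classSize cH ε : ℤ) := by
        rw [Finset.sum_sub_distrib, Finset.sum_const, nsmul_eq_mul]
        ring
      have h4 : ((∑ ε ∈ P, (p - classSize cH ε) : ℕ) : ℤ) ≤ (p : ℤ) - 1 := by
        rw [hcast, h3]
        have hc1 : (1 : ℤ) ≤ (P.card : ℤ) := by exact_mod_cast hPc
        have hpq' : (p : ℤ) ≤ (q : ℤ) := by exact_mod_cast hpq
        nlinarith [hsumP]
      have h5 : ((p - 1 : ℕ) : ℤ) = (p : ℤ) - 1 := by
        rw [Nat.cast_sub (by omega)]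
        simp
      omega
  have hs : ∀ d, d + 1 ≤ q → Stmt12.RR cH d m ≤ d := by
    intro d hd
    have := hkey (d+1) (by omega) hd
    unfold Stmt12.RR Stmt12.rr
    omega
  -- the copy type and class type
  set k := Fintype.card (Stmt12.Cop q m) with hk
  have hkcard : k = ∑ i ∈ Finset.range q, m ^ i := by
    rw [hk, Fintype.card_sigma]
    have h1 : ∀ d : Fin q, Fintype.card (Fin (d : ℕ) → Fin m) = m ^ (d : ℕ) := by
      intro d
      rw [Fintype.card_fun]
      simp
    rw [Finset.sum_congr rfl (fun d _ => h1 d)]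
    exact Fin.sum_univ_eq_sum_range (fun i => m ^ i) q
  have hgeom : ∀ Q : ℕ, (∑ i ∈ Finset.range Q, m ^ i) * (m - 1) + 1 = m ^ Q := by
    intro Q
    induction Q with
    | zero => simp
    | succ n ihn =>
        obtain ⟨m', rfl⟩ : ∃ m', m = m' + 1 := ⟨m - 1, by omega⟩
        simp only [Nat.add_sub_cancel] at ihn ⊢
        rw [Finset.sum_range_succ]
        calc (((∑ i ∈ Finset.range n, (m' + 1) ^ i)) + (m'+1)^n) * m' + 1
            = ((∑ i ∈ Finset.range n, (m' + 1) ^ i) * m' + 1) + (m'+1)^n * m' := by ring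
          _ = (m'+1)^n + (m'+1)^n * m' := by rw [ihn]
          _ = (m'+1)^n * (m' + 1) := by ring
          _ = (m'+1)^(n+1) := by rw [pow_succ]
  have hLcard : Fintype.card (Fin q → Fin m) = k * (m - 1) + 1 := by
    rw [Fintype.card_fun, Fintype.card_fin, Fintype.card_fin, hkcard]
    exact (hgeom q).symm
  have hk1 : 1 ≤ k := by
    rw [hk]
    refine Fintype.card_pos_iff.mpr ⟨⟨⟨0, by omega⟩, Fin.elim0⟩⟩
  -- equivalences (kept opaque to avoid heavy definitional unfolding)
  obtain ⟨eC⟩ : Nonempty (Fin k ≃ Stmt12.Cop q m) := ⟨(Fintype.equivFin (Stmt12.Cop q m)).symm⟩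
  obtain ⟨eL⟩ : Nonempty ((Fin q → Fin m) ≃ Fin (k * (m - 1) + 1)) :=
    ⟨Fintype.equivFinOfCardEq hLcard⟩
  -- the coloring
  refine ⟨k, hk1, fun p => eL (Stmt12.classOf q cH hm (eC p.1) p.2), ?_, ?_⟩
  · -- class sizes
    intro i
    set t : Fin q → Fin m := eL.symm i with ht
    set gT : ℕ → Fin m := fun j => if h : j < q then t ⟨j, h⟩ else ⟨0, hm⟩ with hgT
    have hlen : q ≤ Stmt12.len cH q gT := Stmt12.len_ge q cH hs q le_rfl gT
    have hspec : ∀ j : Fin q, ∃ va : Stmt12.Cop q m × ιH,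
        Stmt12.back q cH hm a₀ q gT (j : ℕ) = some va ∧
        Stmt12.classOf q cH hm va.1 va.2 = Stmt12.down q cH hm q gT (j : ℕ) := by
      intro j
      obtain ⟨v, a, h1, h2⟩ := Stmt12.back_spec q cH hm a₀ hs q le_rfl gT (j : ℕ)
        (by omega)
      exact ⟨(v, a), h1, h2⟩
    choose F hF1 hF2 using hspec
    have hdown : Stmt12.down q cH hm q gT = fun _ => t := by
      funext p i
      rw [Stmt12.down_leaf]
      rw [hgT]
      simp [i.isLt]
    have hclass : ∀ j : Fin q, Stmt12.classOf q cH hm (F j).1 (F j).2 = t := by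
      intro j
      rw [hF2 j]
      rw [hdown]
    -- the injection into the fiber
    set Φ : Fin q → Fin k × ιH := fun j => (eC.symm (F j).1, (F j).2) with hΦ
    have hΦinj : Function.Injective Φ := by
      intro j j' hjj
      rw [hΦ] at hjj
      have hja := congrArg Prod.fst hjj
      have hjb := congrArg Prod.snd hjj
      simp only at hja hjb
      have h1 : (F j).1 = (F j').1 := eC.symm.injective hja
      have h2 : (F j).2 = (F j').2 := hjb
      have hFF : F j = F j' := Prod.ext h1 h2
      have hbb : Stmt12.back q cH hm a₀ q gT (j : ℕ) = Stmt12.back q cH hm a₀ q gT (j' : ℕ) := by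
        rw [hF1 j, hF1 j', hFF]
      have := Stmt12.back_inj q cH hm a₀ hs q le_rfl gT (j : ℕ) (j' : ℕ)
        (by omega) (by omega) hbb
      exact Fin.ext this
    have hΦmem : ∀ j : Fin q, Φ j ∈ Finset.univ.filter
        (fun e : Fin k × ιH => eL (Stmt12.classOf q cH hm (eC e.1) e.2) = i) := by
      intro j
      rw [Finset.mem_filter]
      refine ⟨Finset.mem_univ _, ?_⟩
      rw [hΦ]
      simp only [Equiv.apply_symm_apply]
      rw [hclass j, ht]
      simp
    calc q = (Finset.univ.image Φ).card := by
            rw [Finset.card_image_of_injective _ hΦinj, Finset.card_univ, Fintype.card_fin]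
      _ ≤ _ := by
            apply Finset.card_le_card
            intro x hx
            rw [Finset.mem_image] at hx
            obtain ⟨j, _, rfl⟩ := hx
            exact hΦmem j
  · -- no full rainbow matching
    rintro ⟨f, hf1, hf2⟩
    -- the selection, per leaf
    have hsel : ∀ t : Fin q → Fin m,
        Stmt12.classOf q cH hm (eC (f (eL t)).1) (f (eL t)).2 = t := by
      intro t
      exact eL.injective (by simpa using hf1 (eL t))
    -- the main downward induction
    have claim : ∀ j : ℕ, j ≤ q → ∀ g : ℕ → Fin m,
        ∃ t : Fin q → Fin m,
          (∀ i : Fin q, (i : ℕ) < q - j → t i = g (i : ℕ)) ∧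
          (((eC (f (eL t)).1).1 : ℕ) < q - j) := by
      intro j
      induction j with
      | zero =>
          intro _ g
          refine ⟨fun i => g (i : ℕ), fun i _ => rfl, ?_⟩
          have := ((eC (f (eL (fun i : Fin q => g (i : ℕ)))).1).1).isLt
          omega
      | succ j ihj =>
          intro hjq g
          set d := q - (j+1) with hd
          have hdq : d < q := by omega
          have hdj : q - j = d + 1 := by omega
          -- apply the IH to each updated path
          have IH : ∀ ε : Fin m, ∃ t : Fin q → Fin m,
              (∀ i : Fin q, (i : ℕ) < d + 1 → t i = Function.update g d ε (i : ℕ)) ∧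
              (((eC (f (eL t)).1).1 : ℕ) < d + 1) := by
            intro ε
            obtain ⟨t, h1, h2⟩ := ihj (by omega) (Function.update g d ε)
            rw [hdj] at h1 h2
            exact ⟨t, h1, h2⟩
          choose T hT1 hT2 using IH
          by_cases hex : ∃ ε : Fin m, ((eC (f (eL (T ε))).1).1 : ℕ) < d
          · obtain ⟨ε, hε⟩ := hex
            refine ⟨T ε, ?_, hε⟩
            intro i hi
            rw [hT1 ε i (by omega)]
            rw [Function.update_of_ne (by omega)]
          · push_neg at hex
            exfalso
            -- all selected edges sit in the same copy, at depth d, with all m colors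
            have hTd : ∀ ε : Fin m, ((eC (f (eL (T ε))).1).1 : ℕ) = d := by
              intro ε
              have := hT2 ε
              have := hex ε
              omega
            -- color of the selected edge
            have hcol : ∀ ε : Fin m, cH ((f (eL (T ε))).2) = ε := by
              intro ε
              have h1 := Stmt12.classOf_ext2 q cH hm (eC (f (eL (T ε))).1) ((f (eL (T ε))).2)
                ⟨d, hdq⟩ (by simpa using (hTd ε).symm)
              rw [hsel (T ε)] at h1
              rw [← h1]
              rw [hT1 ε ⟨d, hdq⟩ (by exact Nat.lt_succ_self d)]
              simp
            -- the copies coincide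
            have hVeq : ∀ ε : Fin m, eC (f (eL (T ε))).1
                = eC (f (eL (T ⟨0, hm⟩))).1 := by
              have key : ∀ ε : Fin m, ∀ i : ℕ,
                  Stmt12.pad (q := q) hm (eC (f (eL (T ε))).1) i
                    = (if h : i < d then g i else ⟨0, hm⟩) := by
                intro ε i
                by_cases hi : i < ((eC (f (eL (T ε))).1).1 : ℕ)
                · rw [Stmt12.pad_lt hm _ i hi]
                  have hid : i < d := by
                    have := hTd ε
                    omega
                  rw [dif_pos hid]
                  have h1 := Stmt12.classOf_ext1 q cH hm (eC (f (eL (T ε))).1)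
                    ((f (eL (T ε))).2) ⟨i, by omega⟩ (by simpa using hi)
                  rw [hsel (T ε)] at h1
                  have h2 : T ε ⟨i, by omega⟩ = Function.update g d ε i := by
                    exact hT1 ε ⟨i, by omega⟩ (by simpa using (by omega : i < d + 1))
                  rw [Function.update_of_ne (by omega)] at h2
                  rw [← h1, h2]
                · rw [Stmt12.pad_ge hm _ i hi]
                  have hid : ¬ (i < d) := by
                    have := hTd ε
                    omega
                  rw [dif_neg hid]
              intro ε
              apply Stmt12.Cop_ext hm
              · rw [hTd ε, hTd ⟨0, hm⟩]
              · intro i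
                rw [key ε i, key ⟨0, hm⟩ i]
            have hcopy : ∀ ε : Fin m, (f (eL (T ε))).1 = (f (eL (T ⟨0, hm⟩))).1 := by
              intro ε
              exact eC.injective (hVeq ε)
            -- distinct leaves
            have hTne : ∀ ε δ : Fin m, ε ≠ δ → eL (T ε) ≠ eL (T δ) := by
              intro ε δ hne' hEq
              have h1 : T ε = T δ := eL.injective hEq
              have h2 : T ε ⟨d, hdq⟩ = ε := by
                rw [hT1 ε ⟨d, hdq⟩ (by simp)]; simp
              have h3 : T δ ⟨d, hdq⟩ = δ := by
                rw [hT1 δ ⟨d, hdq⟩ (by simp)]; simp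
              rw [h1, h3] at h2
              exact hne' h2.symm
            -- build a full rainbow matching of H
            apply hH
            refine ⟨fun ε => (f (eL (T ε))).2, hcol, ?_⟩
            intro ε δ hne'
            have hdisj := hf2 (eL (T ε)) (eL (T δ)) (hTne ε δ hne')
            set j₀ := (f (eL (T ⟨0, hm⟩))).1 with hj₀
            rw [show (f (eL (T ε))) = ((f (eL (T ε))).1, (f (eL (T ε))).2) from rfl] at hdisj
            rw [show (f (eL (T δ))) = ((f (eL (T δ))).1, (f (eL (T δ))).2) from rfl] at hdisj
            rw [hcopy ε, hcopy δ] at hdisj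
            exact (Finset.disjoint_map _).mp hdisj
    obtain ⟨t, -, hlt⟩ := claim q le_rfl (fun _ => ⟨0, hm⟩)
    omega
end

section
/- Let H be a multigraph with chromatic index χ' and edge family {e_1, …, e_m}, and let G be the disjoint union of χ' − 1 vertex-disjoint copies of H. For each i ∈ {1,…,m}, let E_i be the class consisting of the χ' − 1 copies of the edge e_i in G. Then E_1, …, E_m are the color classes of a proper edge-coloring of G, and G has no full rainbow matching with respect to E_1, …, E_m. -/
open Finset

/-- The chromatic index of the edge family `E`: the least number of matchings into which
the edge family can be partitioned. -/
def isChromaticIndex {V ι : Type} (E : ι → Finset V) (χ : ℕ) : Prop :=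
  IsLeast {k : ℕ | ∃ c : ι → Fin k, properColoring E c} χ

/-- If `H` is a multigraph with chromatic index `χ'` and `G` is the disjoint union of
`χ' - 1` copies of `H`, colored so that the class of the edge `e_i` consists of all copies
of `e_i`, then this coloring is proper and `G` has no full rainbow matching. -/
theorem stmt16 {VH ιH : Type} [Nonempty ιH]
    (χ' : ℕ)
    (EH : ιH → Finset VH) (hcard : ∀ a, (EH a).card = 2)
    (hchrom : isChromaticIndex EH χ') :
    properColoring
      (fun p : Fin (χ' - 1) × ιH =>
        (EH p.2).map ⟨fun v => (p.1, v), fun x y h => by simpa using h⟩)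
      (Prod.snd : Fin (χ' - 1) × ιH → ιH) ∧
    ¬ hasFullRainbowMatching
      (fun p : Fin (χ' - 1) × ιH =>
        (EH p.2).map ⟨fun v => (p.1, v), fun x y h => by simpa using h⟩)
      (Prod.snd : Fin (χ' - 1) × ιH → ιH) := by
  constructor
  · intro a b hab h2
    rw [Finset.disjoint_left]
    rintro ⟨i, v⟩ ha hb
    simp only [Finset.mem_map, Function.Embedding.coeFn_mk, Prod.mk.injEq] at ha hb
    obtain ⟨x, hx, hx1⟩ := ha
    obtain ⟨y, hy, hy1⟩ := hb
    exact hab (Prod.ext ((congrArg Prod.fst hx1).trans (congrArg Prod.fst hy1).symm) h2)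
  · rintro ⟨f, hf, hdisj⟩
    have hχ : χ' ≠ 0 := by
      rcases hchrom.1 with ⟨c, -⟩
      rintro rfl
      exact (c (Classical.arbitrary ιH)).elim0
    have hmem : χ' - 1 ∈ {k : ℕ | ∃ c : ιH → Fin k, properColoring EH c} := by
      refine ⟨fun i => (f i).1, fun a b hab hcol => ?_⟩
      have hcol' : (f a).1 = (f b).1 := hcol
      have hd := hdisj a b hab
      rw [Finset.disjoint_left] at hd ⊢
      intro v hva hvb
      have h1 : ((f a).1, v) ∈ (EH (f a).2).map
          ⟨fun w => ((f a).1, w), fun x y h => by simpa using h⟩ := by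
        simp only [Finset.mem_map, Function.Embedding.coeFn_mk]
        exact ⟨v, by rw [hf a]; exact hva, rfl⟩
      have h2 : ((f a).1, v) ∈ (EH (f b).2).map
          ⟨fun w => ((f b).1, w), fun x y h => by simpa using h⟩ := by
        simp only [Finset.mem_map, Function.Embedding.coeFn_mk]
        exact ⟨v, by rw [hf b]; exact hvb, by rw [hcol']; rfl⟩
      exact hd h1 h2
    have := hchrom.2 hmem
    omega
end

section
/- For every even integer n ≥ 2, there exists a proper edge-coloring of the complete bipartite graph K_{n,n} into n color classes E_1, …, E_n, each a perfect matching of size n, such that K_{n,n} has no full rainbow matching with respect to E_1, …, E_n. -/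
open Finset

open Fin.CommRing in
/-- For every even `n ≥ 2` there is a proper edge-coloring of `K_{n,n}` into `n` color
classes, each a perfect matching of size `n`, with no full rainbow matching. -/
theorem stmt17 (n : ℕ) (hn : 2 ≤ n) (heven : n % 2 = 0) :
    ∃ c : Fin n × Fin n → Fin n,
      properColoring
        (fun p : Fin n × Fin n => ({Sum.inl p.1, Sum.inr p.2} : Finset (Fin n ⊕ Fin n))) c ∧
      (∀ i : Fin n, classSize c i = n) ∧
      (∀ (i : Fin n) (v : Fin n ⊕ Fin n), ∃ a : Fin n × Fin n,
        c a = i ∧ v ∈ ({Sum.inl a.1, Sum.inr a.2} : Finset (Fin n ⊕ Fin n))) ∧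
      ¬ hasFullRainbowMatching
        (fun p : Fin n × Fin n => ({Sum.inl p.1, Sum.inr p.2} : Finset (Fin n ⊕ Fin n))) c := by
  haveI : NeZero n := ⟨by omega⟩
  refine ⟨fun p => p.1 + p.2, ?_, ?_, ?_, ?_⟩
  · -- proper
    intro a b hab hcab
    have hcab' : a.1 + a.2 = b.1 + b.2 := hcab
    rw [Finset.disjoint_left]
    intro x hx hx'
    simp only [Finset.mem_insert, Finset.mem_singleton] at hx hx'
    rcases hx with rfl | rfl <;> rcases hx' with h2 | h2
    · rw [Sum.inl.injEq] at h2
      apply hab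
      rw [h2] at hcab'
      exact Prod.ext h2 (add_left_cancel hcab')
    · simp at h2
    · simp at h2
    · rw [Sum.inr.injEq] at h2
      apply hab
      rw [h2] at hcab'
      exact Prod.ext (add_right_cancel hcab') h2
  · -- class sizes
    intro i
    unfold classSize
    have : (Finset.univ.filter fun p : Fin n × Fin n => p.1 + p.2 = i) =
        Finset.univ.image (fun j : Fin n => (j, i - j)) := by
      ext p
      simp only [Finset.mem_filter, Finset.mem_univ, true_and, Finset.mem_image]
      constructor
      · intro h
        exact ⟨p.1, by rw [← h]; simp⟩
      · rintro ⟨j, rfl⟩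
        simp
    rw [this, Finset.card_image_of_injective _ (fun a b h => (Prod.ext_iff.mp h).1)]
    simp
  · -- covering
    intro i v
    rcases v with x | y
    · exact ⟨(x, i - x), by simp, by simp⟩
    · exact ⟨(i - y, y), by simp, by simp⟩
  · -- no full rainbow matching
    rintro ⟨f, hc, hdisj⟩
    have hx : Function.Injective fun i => (f i).1 := by
      intro i j h
      have h' : (f i).1 = (f j).1 := h
      by_contra hij
      have hd := hdisj i j hij
      rw [Finset.disjoint_left] at hd
      have hm1 : Sum.inl (f i).1 ∈ ({Sum.inl (f i).1, Sum.inr (f i).2} : Finset (Fin n ⊕ Fin n)) := by simp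
      have hm2 : Sum.inl (f i).1 ∈ ({Sum.inl (f j).1, Sum.inr (f j).2} : Finset (Fin n ⊕ Fin n)) := by
        rw [h']; simp
      exact hd hm1 hm2
    have hy : Function.Injective fun i => (f i).2 := by
      intro i j h
      have h' : (f i).2 = (f j).2 := h
      by_contra hij
      have hd := hdisj i j hij
      rw [Finset.disjoint_left] at hd
      have hm1 : Sum.inr (f i).2 ∈ ({Sum.inl (f i).1, Sum.inr (f i).2} : Finset (Fin n ⊕ Fin n)) := by simp
      have hm2 : Sum.inr (f i).2 ∈ ({Sum.inl (f j).1, Sum.inr (f j).2} : Finset (Fin n ⊕ Fin n)) := by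
        rw [h']; simp
      exact hd hm1 hm2
    have hxb := (Finite.injective_iff_bijective.mp hx)
    have hyb := (Finite.injective_iff_bijective.mp hy)
    set s : Fin n := ∑ i : Fin n, i with hs
    have h1 : s = s + s := by
      calc s = ∑ i : Fin n, ((f i).1 + (f i).2) := by
              rw [hs]; exact Finset.sum_congr rfl fun i _ => (hc i).symm
        _ = (∑ i : Fin n, (f i).1) + ∑ i : Fin n, (f i).2 := Finset.sum_add_distrib
        _ = s + s := by
              rw [hxb.sum_comp (fun v : Fin n => v), hyb.sum_comp (fun v : Fin n => v)]
    have h0 : s = 0 := by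
      nth_rewrite 1 [← add_zero s] at h1
      exact (add_left_cancel h1).symm
    -- compute s explicitly
    obtain ⟨k, hk⟩ : ∃ k, n = 2 * (k + 1) := ⟨n / 2 - 1, by omega⟩
    have hval : s = ((((k + 1) * (2 * k + 1)) : ℕ) : Fin n) := by
      have e1 : s = ((∑ i : Fin n, (i : ℕ) : ℕ) : Fin n) := by
        rw [hs, Nat.cast_sum]
        exact Finset.sum_congr rfl fun i _ => (Fin.cast_val_eq_self i).symm
      have e2 : (∑ i : Fin n, (i : ℕ)) = ∑ i ∈ Finset.range n, i :=
        Fin.sum_univ_eq_sum_range (fun i => i) n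
      have e3 : (∑ i ∈ Finset.range n, i) = (k + 1) * (2 * k + 1) := by
        have h2 := Finset.sum_range_id_mul_two n
        have h3 : n * (n - 1) = ((k + 1) * (2 * k + 1)) * 2 := by
          have hsub : n - 1 = 2 * k + 1 := by omega
          rw [hsub, hk]; ring
        rw [h3] at h2
        exact Nat.eq_of_mul_eq_mul_right (by norm_num) h2
      rw [e1, e2, e3]
    have hvv : ((((k + 1) * (2 * k + 1)) : ℕ) : Fin n).val = k + 1 := by
      rw [Fin.val_natCast]
      have : (k + 1) * (2 * k + 1) = n * k + (k + 1) := by rw [hk]; ring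
      rw [this, Nat.mul_add_mod]
      exact Nat.mod_eq_of_lt (by omega)
    rw [hval] at h0
    have : ((((k + 1) * (2 * k + 1)) : ℕ) : Fin n).val = 0 := by rw [h0]; rfl
    omega
end

section
/- For every integer n ≥ 3 with n ≡ 3 (mod 4), there exist a multigraph G and a proper edge-coloring of G into n color classes E_1, …, E_n, each a perfect matching of G of size n + 1, such that G has no full rainbow matching with respect to E_1, …, E_n. -/
open Finset

/-- vertex-pattern helpers: within a group of 4 vertices, pattern `m ∈ {1,2,3}`
is a perfect matching of K4; edge `h ∈ {0,1}` has endpoints `pu m h` and `pv m h`. -/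
def pu (m h : ℕ) : ℕ := if m = 1 then 2*h else h
def pv (m h : ℕ) : ℕ := if m = 1 then 2*h+1 else if m = 2 then h+2 else 3-h
def colm (i : ℕ) : ℕ := if i = 0 then 1 else if i = 1 then 2 else 3

lemma pu_le (m h : ℕ) (hh : h ≤ 1) : pu m h ≤ 2 := by unfold pu; split <;> omega
lemma pv_le (m h : ℕ) (hh : h ≤ 1) : pv m h ≤ 3 := by unfold pv; split_ifs <;> omega
lemma colm_ge (i : ℕ) : 1 ≤ colm i := by unfold colm; split_ifs <;> omega
lemma colm_le (i : ℕ) : colm i ≤ 3 := by unfold colm; split_ifs <;> omega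
lemma pu_ne_pv (m h : ℕ) (hh : h ≤ 1) : pu m h ≠ pv m h := by
  unfold pu pv; split_ifs <;> omega

lemma vbound (n k : ℕ) (a : Fin (n*(2*k))) (u : ℕ) (hu : u ≤ 3) :
    4*((a.val % (2*k))/2) + u < 4*k := by
  have ha := a.isLt
  have hk : 0 < k := by
    by_contra hk0
    have h0 : n*(2*k) = 0 := by
      have : 2*k = 0 := by omega
      rw [this, Nat.mul_zero]
    omega
  have he : a.val % (2*k) < 2*k := Nat.mod_lt _ (by omega)
  omega

def cE (n k : ℕ) (a : Fin (n*(2*k))) : Finset (Fin (4*k)) :=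
  { ⟨4*((a.val % (2*k))/2) + pu (colm (a.val/(2*k))) ((a.val % (2*k)) % 2),
      vbound n k a _ (by have := pu_le (colm (a.val/(2*k))) ((a.val % (2*k)) % 2) (by omega); omega)⟩,
    ⟨4*((a.val % (2*k))/2) + pv (colm (a.val/(2*k))) ((a.val % (2*k)) % 2),
      vbound n k a _ (pv_le _ _ (by omega))⟩ }

def cC (n k : ℕ) (a : Fin (n*(2*k))) : Fin n :=
  ⟨a.val/(2*k), by
    have ha := a.isLt
    have hk : 0 < 2*k := by
      by_contra hk0
      have h0 : n*(2*k) = 0 := by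
        have : 2*k = 0 := by omega
        rw [this, Nat.mul_zero]
      omega
    exact (Nat.div_lt_iff_lt_mul hk).mpr ha⟩

lemma patt_sep (m ha hb qa qb : ℕ) (hha : ha ≤ 1) (hhb : hb ≤ 1)
    (hne : qa ≠ qb ∨ ha ≠ hb) :
    (4*qa + pu m ha ≠ 4*qb + pu m hb) ∧ (4*qa + pu m ha ≠ 4*qb + pv m hb) ∧
    (4*qa + pv m ha ≠ 4*qb + pu m hb) ∧ (4*qa + pv m ha ≠ 4*qb + pv m hb) := by
  unfold pu pv; split_ifs <;> omega

lemma patt_arith (ma mb ha hb qa qb : ℕ) (hma1 : 1 ≤ ma) (hma3 : ma ≤ 3)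
    (hmb1 : 1 ≤ mb) (hmb3 : mb ≤ 3) (hha : ha ≤ 1) (hhb : hb ≤ 1) (hq : qa = qb)
    (h11 : 4*qa + pu ma ha ≠ 4*qb + pu mb hb) (h12 : 4*qa + pu ma ha ≠ 4*qb + pv mb hb)
    (h21 : 4*qa + pv ma ha ≠ 4*qb + pu mb hb) (h22 : 4*qa + pv ma ha ≠ 4*qb + pv mb hb) :
    ma = mb ∧ ha ≠ hb := by
  unfold pu pv at *; split_ifs at * <;> omega

def hch (iv r : ℕ) : ℕ :=
  if iv = 0 then r/2 else if iv = 1 then r % 2 else if r ≤ 1 then r else 3-r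

lemma hch_le (iv r : ℕ) (hr : r ≤ 3) : hch iv r ≤ 1 := by
  unfold hch; split_ifs <;> omega

lemma cover_arith (iv r : ℕ) (hr : r ≤ 3) :
    r = pu (colm iv) (hch iv r) ∨ r = pv (colm iv) (hch iv r) := by
  unfold pu pv colm hch; split_ifs <;> omega

lemma cE_disj_iff (n k : ℕ) (a b : Fin (n*(2*k))) :
    Disjoint (cE n k a) (cE n k b) ↔
      (4*((a.val % (2*k))/2) + pu (colm (a.val/(2*k))) ((a.val % (2*k)) % 2) ≠
       4*((b.val % (2*k))/2) + pu (colm (b.val/(2*k))) ((b.val % (2*k)) % 2)) ∧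
      (4*((a.val % (2*k))/2) + pu (colm (a.val/(2*k))) ((a.val % (2*k)) % 2) ≠
       4*((b.val % (2*k))/2) + pv (colm (b.val/(2*k))) ((b.val % (2*k)) % 2)) ∧
      (4*((a.val % (2*k))/2) + pv (colm (a.val/(2*k))) ((a.val % (2*k)) % 2) ≠
       4*((b.val % (2*k))/2) + pu (colm (b.val/(2*k))) ((b.val % (2*k)) % 2)) ∧
      (4*((a.val % (2*k))/2) + pv (colm (a.val/(2*k))) ((a.val % (2*k)) % 2) ≠
       4*((b.val % (2*k))/2) + pv (colm (b.val/(2*k))) ((b.val % (2*k)) % 2)) := by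
  simp only [cE, Finset.disjoint_insert_left, Finset.disjoint_singleton_left,
    Finset.mem_insert, Finset.mem_singleton, Fin.mk.injEq, not_or]
  tauto

lemma card_filter_cC (n k : ℕ) (hk : 0 < k) (i : Fin n) :
    (Finset.univ.filter fun a => cC n k a = i).card = 2*k := by
  have h2k : 0 < 2*k := by omega
  have key : (Finset.univ.filter fun a => cC n k a = i).card
      = (Finset.univ : Finset (Fin (2*k))).card := by
    apply Finset.card_nbij' (i := fun a => (⟨a.val % (2*k), Nat.mod_lt _ h2k⟩ : Fin (2*k)))
      (j := fun e => (⟨i.val*(2*k)+e.val, by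
        have h1 : i.val*(2*k) + e.val < (i.val+1)*(2*k) := by
          have := e.isLt
          rw [add_mul, one_mul]; omega
        exact lt_of_lt_of_le h1 (Nat.mul_le_mul_right _ i.isLt)⟩ : Fin (n*(2*k))))
    · intro a _; exact Finset.mem_univ _
    · intro e _
      simp only [Finset.mem_coe, Finset.mem_filter, Finset.mem_univ, true_and]
      apply Fin.ext
      show (i.val*(2*k)+e.val) / (2*k) = i.val
      rw [add_comm, Nat.add_mul_div_right _ _ h2k, Nat.div_eq_of_lt e.isLt, Nat.zero_add]
    · intro a ha
      simp only [Finset.mem_coe, Finset.mem_filter, Finset.mem_univ, true_and] at ha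
      have hdiv : a.val / (2*k) = i.val := congrArg Fin.val ha
      apply Fin.ext
      show i.val*(2*k) + a.val % (2*k) = a.val
      conv_rhs => rw [← Nat.div_add_mod a.val (2*k)]
      rw [hdiv]; ring
    · intro e _
      apply Fin.ext
      show (i.val*(2*k)+e.val) % (2*k) = e.val
      rw [add_comm, Nat.add_mul_mod_self_right, Nat.mod_eq_of_lt e.isLt]
  simpa using key


/-- For every `n ≥ 3` with `n ≡ 3 (mod 4)` there are a multigraph `G` and a proper
edge-coloring of `G` into `n` color classes, each a perfect matching of size `n + 1`,
with no full rainbow matching. -/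
theorem stmt18 (n : ℕ) (hn : 3 ≤ n) (hmod : n % 4 = 3) :
    ∃ (N M : ℕ) (E : Fin M → Finset (Fin N)) (c : Fin M → Fin n),
      (∀ a, (E a).card = 2) ∧
      properColoring E c ∧
      (∀ i : Fin n, classSize c i = n + 1) ∧
      (∀ (i : Fin n) (v : Fin N), ∃ a, c a = i ∧ v ∈ E a) ∧
      ¬ hasFullRainbowMatching E c := by
  have hodd : n % 2 = 1 := by omega
  set k := (n+1)/2 with hkdef
  have h2k : 2*k = n+1 := by omega
  have hk : 0 < k := by omega
  have hk2 : 2 ≤ k := by omega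
  have h2kpos : 0 < 2*k := by omega
  refine ⟨4*k, n*(2*k), cE n k, cC n k, ?_, ?_, ?_, ?_, ?_⟩
  · -- card = 2
    intro a
    unfold cE
    refine Finset.card_pair ?_
    simp only [ne_eq, Fin.mk.injEq]
    intro h
    have := pu_ne_pv (colm (a.val/(2*k))) ((a.val % (2*k)) % 2) (by omega)
    omega
  · -- proper coloring
    intro a b hab hcc
    have hdiv : a.val/(2*k) = b.val/(2*k) := congrArg Fin.val hcc
    rw [cE_disj_iff, hdiv]
    refine patt_sep _ _ _ _ _ (by omega) (by omega) ?_
    by_contra hcon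
    push_neg at hcon
    obtain ⟨h1, h2⟩ := hcon
    have hne : a.val ≠ b.val := fun h => hab (Fin.ext h)
    have hda := Nat.div_add_mod a.val (2*k)
    have hdb := Nat.div_add_mod b.val (2*k)
    have hemod : a.val % (2*k) = b.val % (2*k) := by omega
    rw [hdiv, hemod] at hda
    omega
  · -- class sizes
    intro i
    show (Finset.univ.filter fun a => cC n k a = i).card = n + 1
    rw [← h2k]
    exact card_filter_cC n k hk i
  · -- coverage
    intro i v
    have hr : v.val % 4 ≤ 3 := by omega
    have hq : v.val / 4 < k := by have := v.isLt; omega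
    set q := v.val / 4 with hqd
    set r := v.val % 4 with hrd
    set h := hch i.val r with hhd
    have hh : h ≤ 1 := hch_le _ _ hr
    have he : 2*q + h < 2*k := by omega
    have hbnd : i.val*(2*k) + (2*q + h) < n*(2*k) := by
      have h1 : i.val*(2*k) + (2*q+h) < (i.val+1)*(2*k) := by
        rw [add_mul, one_mul]; omega
      exact lt_of_lt_of_le h1 (Nat.mul_le_mul_right _ i.isLt)
    refine ⟨⟨i.val*(2*k) + (2*q + h), hbnd⟩, ?_, ?_⟩
    · apply Fin.ext
      show (i.val*(2*k) + (2*q + h)) / (2*k) = i.val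
      rw [add_comm, Nat.add_mul_div_right _ _ h2kpos, Nat.div_eq_of_lt he, Nat.zero_add]
    · have amod : (i.val*(2*k) + (2*q + h)) % (2*k) = 2*q + h := by
        rw [add_comm, Nat.add_mul_mod_self_right, Nat.mod_eq_of_lt he]
      have adiv : (i.val*(2*k) + (2*q + h)) / (2*k) = i.val := by
        rw [add_comm, Nat.add_mul_div_right _ _ h2kpos, Nat.div_eq_of_lt he, Nat.zero_add]
      simp only [cE, Finset.mem_insert, Finset.mem_singleton, Fin.ext_iff]
      rw [amod, adiv]
      have h1 : (2*q+h)/2 = q := by omega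
      have h2 : (2*q+h)%2 = h := by omega
      rw [h1, h2]
      have hv : v.val = 4*q + r := by omega
      have hcov := cover_arith i.val r hr
      rw [← hhd] at hcov
      rcases hcov with hc | hc
      · left; omega
      · right; omega
  · -- no full rainbow matching
    rintro ⟨f, hcol, hdisj⟩
    have hdivcol : ∀ i : Fin n, (f i).val / (2*k) = i.val := fun i => congrArg Fin.val (hcol i)
    have hHle : ∀ i : Fin n, (f i).val % (2*k) % 2 ≤ 1 := fun i => by omega
    have key : ∀ i j : Fin n, i ≠ j → ((f i).val % (2*k))/2 = ((f j).val % (2*k))/2 →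
        colm i.val = colm j.val ∧ (f i).val % (2*k) % 2 ≠ (f j).val % (2*k) % 2 := by
      intro i j hij hq
      have hd := (cE_disj_iff n k (f i) (f j)).mp (hdisj i j hij)
      rw [hdivcol i, hdivcol j] at hd
      exact patt_arith _ _ _ _ _ _ (colm_ge _) (colm_le _) (colm_ge _) (colm_le _)
        (hHle i) (hHle j) hq hd.1 hd.2.1 hd.2.2.1 hd.2.2.2
    set Q : Fin n → ℕ := fun i => ((f i).val % (2*k))/2 with hQ
    have hQdef : ∀ i, Q i = ((f i).val % (2*k))/2 := fun i => by rw [hQ]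
    have keyQ : ∀ i j : Fin n, i ≠ j → Q i = Q j →
        colm i.val = colm j.val ∧ (f i).val % (2*k) % 2 ≠ (f j).val % (2*k) % 2 := by
      intro i j hij hq
      rw [hQdef i, hQdef j] at hq
      exact key i j hij hq
    set z : Fin n := ⟨0, by omega⟩ with hzd
    set o : Fin n := ⟨1, by omega⟩ with hod
    have hzo : z ≠ o := by
      intro h
      have := congrArg Fin.val h
      simp [hzd, hod] at this
    have hQlt : ∀ i, Q i < k := by
      intro i
      have h1 : (f i).val % (2*k) < 2*k := Nat.mod_lt _ (by omega)
      rw [hQdef i]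
      omega
    have hcz : colm z.val = 1 := rfl
    have hco : colm o.val = 2 := rfl
    set S : Finset (Fin n) := Finset.univ.filter (fun i => 2 ≤ i.val) with hSd
    have hcS : ∀ i ∈ S, colm i.val = 3 := by
      intro i hi
      simp only [hSd, Finset.mem_filter] at hi
      unfold colm; split_ifs <;> omega
    have hiz : ∀ i ∈ S, i ≠ z := by
      intro i hi h
      simp only [hSd, Finset.mem_filter] at hi
      have := congrArg Fin.val h
      simp [hzd] at this
      omega
    have hio : ∀ i ∈ S, i ≠ o := by
      intro i hi h
      simp only [hSd, Finset.mem_filter] at hi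
      have := congrArg Fin.val h
      simp [hod] at this
      omega
    have hQz : ∀ i ∈ S, Q i ≠ Q z := by
      intro i hi hqe
      have := (keyQ i z (hiz i hi) hqe).1
      rw [hcz, hcS i hi] at this
      omega
    have hQo : ∀ i ∈ S, Q i ≠ Q o := by
      intro i hi hqe
      have := (keyQ i o (hio i hi) hqe).1
      rw [hco, hcS i hi] at this
      omega
    have hQzo : Q z ≠ Q o := by
      intro h
      have := (keyQ z o hzo h).1
      rw [hcz, hco] at this
      omega
    have himg : ∀ i ∈ S, Q i ∈ (Finset.range k) \ {Q z, Q o} := by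
      intro i hi
      rw [Finset.mem_sdiff]
      refine ⟨Finset.mem_range.mpr (hQlt i), ?_⟩
      simp only [Finset.mem_insert, Finset.mem_singleton, not_or]
      exact ⟨hQz i hi, hQo i hi⟩
    have hfib : ∀ b ∈ (Finset.range k) \ {Q z, Q o}, (S.filter fun i => Q i = b).card ≤ 2 := by
      intro b _
      by_contra hcon
      push_neg at hcon
      obtain ⟨i, hi, j, hj, l, hl, hij, hil, hjl⟩ := Finset.two_lt_card.mp hcon
      simp only [Finset.mem_filter] at hi hj hl
      have k1 := (keyQ i j hij (hi.2.trans hj.2.symm)).2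
      have k2 := (keyQ i l hil (hi.2.trans hl.2.symm)).2
      have k3 := (keyQ j l hjl (hj.2.trans hl.2.symm)).2
      have b1 := hHle i; have b2 := hHle j; have b3 := hHle l
      omega
    have hcount := Finset.card_le_mul_card_image_of_maps_to himg 2 hfib
    have hsubT : ({Q z, Q o} : Finset ℕ) ⊆ Finset.range k := by
      intro x hx
      simp only [Finset.mem_insert, Finset.mem_singleton] at hx
      rcases hx with h | h <;> subst h <;> exact Finset.mem_range.mpr (hQlt _)
    have hTcard : ((Finset.range k) \ {Q z, Q o}).card = k - 2 := by
      rw [Finset.card_sdiff_of_subset hsubT, Finset.card_range, Finset.card_pair hQzo]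
    have hsub : (Finset.univ.filter fun i : Fin n => ¬ 2 ≤ i.val) ⊆ {z, o} := by
      intro x hx
      simp only [Finset.mem_filter, Finset.mem_univ, true_and, not_le] at hx
      simp only [Finset.mem_insert, Finset.mem_singleton, Fin.ext_iff, hzd, hod]
      omega
    have hsplit := Finset.card_filter_add_card_filter_not
      (s := (Finset.univ : Finset (Fin n))) (p := fun i : Fin n => 2 ≤ i.val)
    have hcard2 : (Finset.univ.filter fun i : Fin n => ¬ 2 ≤ i.val).card ≤ 2 := by
      have := Finset.card_le_card hsub
      rwa [Finset.card_pair hzo] at this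
    have huniv : (Finset.univ : Finset (Fin n)).card = n := by
      rw [Finset.card_univ, Fintype.card_fin]
    have hScard : n - 2 ≤ S.card := by
      rw [hSd]; omega
    rw [hTcard] at hcount
    omega
end

section
/- For every integer m ≥ 2, there exists a proper edge-coloring of the disjoint union G of two vertex-disjoint copies of the complete graph K_{2^m} into 2^m − 1 color classes E_1, …, E_{2^m − 1}, each a perfect matching of G of size 2^m, such that G has no full rainbow matching with respect to E_1, …, E_{2^m − 1}. -/
open Finset

/-- The disjoint union of two copies of the complete graph `K_{2^m}`: vertices are
`Bool × Fin (2^m)`, and edges are indexed by a component together with a 2-element vertex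
subset of that component. -/
def twoCompleteGraphs (m : ℕ) :
    Bool × {s : Finset (Fin (2 ^ m)) // s.card = 2} → Finset (Bool × Fin (2 ^ m)) :=
  fun p => (p.2 : Finset (Fin (2 ^ m))).map ⟨fun v => (p.1, v), fun x y h => by simpa using h⟩

abbrev Gp (m : ℕ) := Fin m → ZMod 2

lemma card_Gp (m : ℕ) : Fintype.card (Gp m) = 2 ^ m := by simp [Gp]

noncomputable def phiEq (m : ℕ) : Fin (2 ^ m) ≃ Gp m :=
  (Fintype.equivFinOfCardEq (card_Gp m)).symm

lemma card_ne_zero' (m : ℕ) : Fintype.card {g : Gp m // g ≠ 0} = 2 ^ m - 1 := by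
  have := Fintype.card_subtype_compl (fun g : Gp m => g = 0)
  simp only [Fintype.card_subtype_eq] at this
  simpa [Ne, card_Gp] using this

noncomputable def psiEq (m : ℕ) : {g : Gp m // g ≠ 0} ≃ Fin (2 ^ m - 1) :=
  Fintype.equivFinOfCardEq (card_ne_zero' m)

lemma Gp.add_self (m : ℕ) (g : Gp m) : g + g = 0 := by
  funext j; have : ∀ x : ZMod 2, x + x = 0 := by decide
  simpa using this (g j)

lemma Gp.cancel (m : ℕ) (u v : Gp m) : u + (u + v) = v := by
  rw [← add_assoc, Gp.add_self, zero_add]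

lemma Gp.eq_of_add_eq_zero (m : ℕ) {u v : Gp m} (h : u + v = 0) : u = v := by
  have := Gp.cancel m u v
  rw [h, add_zero] at this
  exact this

lemma Gp.sum_univ (m : ℕ) (hm : 2 ≤ m) : ∑ g : Gp m, g = 0 := by
  funext j
  rw [Finset.sum_apply]
  have h1 : ∑ g : Gp m, g j = ∑ p : ZMod 2 × ({k : Fin m // k ≠ j} → ZMod 2), p.1 :=
    Fintype.sum_equiv (Equiv.piSplitAt j (fun _ : Fin m => ZMod 2)) _ _
      (fun g => by simp [Equiv.piSplitAt])
  rw [h1, Fintype.sum_prod_type]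
  have hcard : Fintype.card ({k : Fin m // k ≠ j} → ZMod 2) = 2 ^ (m - 1) := by
    rw [Fintype.card_fun, ZMod.card, Fintype.card_subtype_compl]
    simp [Fintype.card_subtype_eq]
  have hs : ∀ x : ZMod 2, ∑ _r : ({k : Fin m // k ≠ j} → ZMod 2), x = (2 ^ (m - 1)) • x := by
    intro x; rw [Finset.sum_const, Finset.card_univ, hcard]
  simp only [hs]
  have h2 : (2 : ZMod 2) = 0 := by decide
  have h4 : ∑ x : ZMod 2, (2 ^ (m-1)) • x = (2 ^ (m-1) : ℕ) • (∑ x : ZMod 2, x) := by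
    rw [Finset.smul_sum]
  rw [h4]
  have h3 : (∑ x : ZMod 2, x) = 1 := by decide
  rw [h3, nsmul_eq_mul, mul_one]
  push_cast
  rw [h2]
  have : m - 1 ≠ 0 := by omega
  simp [zero_pow this]

noncomputable def colorVal (m : ℕ) (s : Finset (Fin (2 ^ m))) : Gp m :=
  ∑ x ∈ s, phiEq m x

lemma pair_structure (m : ℕ) (s : Finset (Fin (2 ^ m))) (hs : s.card = 2)
    (x : Fin (2 ^ m)) (hx : x ∈ s) :
    colorVal m s ≠ 0 ∧ s = {x, (phiEq m).symm (phiEq m x + colorVal m s)} := by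
  obtain ⟨a, b, hab, rfl⟩ := Finset.card_eq_two.mp hs
  have hcv : colorVal m {a, b} = phiEq m a + phiEq m b := by
    simp [colorVal, Finset.sum_pair hab]
  have hne : colorVal m {a, b} ≠ 0 := by
    rw [hcv]
    intro h
    exact hab ((phiEq m).injective (Gp.eq_of_add_eq_zero m h))
  refine ⟨hne, ?_⟩
  rcases Finset.mem_insert.mp hx with rfl | hx
  · rw [hcv, Gp.cancel, Equiv.symm_apply_apply]
  · rw [Finset.mem_singleton] at hx
    subst hx
    rw [hcv, add_comm (phiEq m a), Gp.cancel, Equiv.symm_apply_apply]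
    exact Finset.pair_comm a x

lemma mem_tcg (m : ℕ) (p : Bool × {s : Finset (Fin (2 ^ m)) // s.card = 2})
    (b : Bool) (v : Fin (2 ^ m)) :
    (b, v) ∈ twoCompleteGraphs m p ↔ b = p.1 ∧ v ∈ p.2.1 := by
  simp only [twoCompleteGraphs, Finset.mem_map, Function.Embedding.coeFn_mk, Prod.mk.injEq]
  constructor
  · rintro ⟨x, hx, h⟩; change (p.1, x) = (b, v) at h; simp only [Prod.mk.injEq] at h; obtain ⟨h1, rfl⟩ := h; exact ⟨h1.symm, hx⟩
  · rintro ⟨rfl, hv⟩; exact ⟨v, hv, rfl⟩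

/-- For every `m ≥ 2` there is a proper edge-coloring of the disjoint union of two copies of
`K_{2^m}` into `2^m - 1` color classes, each a perfect matching of size `2^m`, with no full
rainbow matching. -/
theorem stmt19 (m : ℕ) (hm : 2 ≤ m) :
    ∃ c : (Bool × {s : Finset (Fin (2 ^ m)) // s.card = 2}) → Fin (2 ^ m - 1),
      properColoring (twoCompleteGraphs m) c ∧
      (∀ i, classSize c i = 2 ^ m) ∧
      (∀ (i : Fin (2 ^ m - 1)) (v : Bool × Fin (2 ^ m)),
        ∃ a, c a = i ∧ v ∈ twoCompleteGraphs m a) ∧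
      ¬ hasFullRainbowMatching (twoCompleteGraphs m) c := by
  classical
  have hne : ∀ s : Finset (Fin (2 ^ m)), s.card = 2 → colorVal m s ≠ 0 := by
    intro s hs
    obtain ⟨a, b, hab, rfl⟩ := Finset.card_eq_two.mp hs
    exact (pair_structure m _ hs a (Finset.mem_insert_self a {b})).1
  set c : (Bool × {s : Finset (Fin (2 ^ m)) // s.card = 2}) → Fin (2 ^ m - 1) :=
    fun p => psiEq m ⟨colorVal m p.2.1, hne _ p.2.2⟩ with hc
  have hproper : properColoring (twoCompleteGraphs m) c := by
    intro a b hab hcab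
    have hcv : colorVal m a.2.1 = colorVal m b.2.1 :=
      congrArg Subtype.val ((psiEq m).injective hcab)
    rw [Finset.disjoint_left]
    rintro ⟨bb, v⟩ hva hvb
    obtain ⟨h1a, h2a⟩ := (mem_tcg m a bb v).mp hva
    obtain ⟨h1b, h2b⟩ := (mem_tcg m b bb v).mp hvb
    apply hab
    have hs : a.2 = b.2 := Subtype.ext (by
      rw [(pair_structure m a.2.1 a.2.2 v h2a).2, (pair_structure m b.2.1 b.2.2 v h2b).2, hcv])
    exact Prod.ext (h1a.symm.trans h1b) hs
  have hcover : ∀ (i : Fin (2 ^ m - 1)) (v : Bool × Fin (2 ^ m)),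
      ∃ a, c a = i ∧ v ∈ twoCompleteGraphs m a := by
    rintro i ⟨bb, v⟩
    set d := (psiEq m).symm i with hd
    set w := (phiEq m).symm (phiEq m v + d.1) with hw
    have hvw : v ≠ w := by
      intro h
      have h1 : phiEq m v = phiEq m v + d.1 := by
        conv_lhs => rw [h, hw, Equiv.apply_symm_apply]
      have h2 : phiEq m v + (phiEq m v + d.1) = d.1 := Gp.cancel m _ _
      rw [← h1, Gp.add_self] at h2
      exact d.2 h2.symm
    have hcard : ({v, w} : Finset (Fin (2 ^ m))).card = 2 := Finset.card_pair hvw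
    have hcv : colorVal m {v, w} = d.1 := by
      show ∑ x ∈ ({v, w} : Finset (Fin (2 ^ m))), phiEq m x = d.1
      rw [Finset.sum_pair hvw, hw, Equiv.apply_symm_apply, Gp.cancel]
    refine ⟨(bb, ⟨{v, w}, hcard⟩), ?_, ?_⟩
    · show psiEq m ⟨colorVal m {v, w}, _⟩ = i
      rw [show (⟨colorVal m {v, w}, hne _ hcard⟩ : {g : Gp m // g ≠ 0}) = d from
        Subtype.ext hcv, hd, Equiv.apply_symm_apply]
    · exact (mem_tcg m _ bb v).mpr ⟨rfl, Finset.mem_insert_self _ _⟩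
  have hclass : ∀ i, classSize c i = 2 ^ m := by
    intro i
    have hdisjF : ∀ a ∈ Finset.univ.filter (fun a => c a = i),
        ∀ b ∈ Finset.univ.filter (fun a => c a = i),
        a ≠ b → Disjoint (twoCompleteGraphs m a) (twoCompleteGraphs m b) := by
      intro a ha b hb hab
      exact hproper a b hab
        (((Finset.mem_filter.mp ha).2).trans ((Finset.mem_filter.mp hb).2).symm)
    have h1 := Finset.card_biUnion hdisjF
    have hunion : (Finset.univ.filter (fun a => c a = i)).biUnion (twoCompleteGraphs m)
        = Finset.univ := by
      apply Finset.eq_univ_iff_forall.mpr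
      intro v
      obtain ⟨a, hca, hva⟩ := hcover i v
      exact Finset.mem_biUnion.mpr ⟨a, Finset.mem_filter.mpr ⟨Finset.mem_univ a, hca⟩, hva⟩
    rw [hunion] at h1
    have h2 : ∀ a : Bool × {s : Finset (Fin (2 ^ m)) // s.card = 2},
        (twoCompleteGraphs m a).card = 2 := by
      intro a; simp [twoCompleteGraphs, a.2.2]
    rw [Finset.sum_congr rfl (fun a _ => h2 a), Finset.sum_const, smul_eq_mul] at h1
    have h3 : (Finset.univ : Finset (Bool × Fin (2 ^ m))).card = 2 * 2 ^ m := by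
      simp [Finset.card_univ]
    rw [h3] at h1
    show (Finset.univ.filter (fun a => c a = i)).card = 2 ^ m
    omega
  refine ⟨c, hproper, hclass, hcover, ?_⟩
  rintro ⟨f, hf, hdisj⟩
  have hDf : ∀ i, colorVal m (f i).2.1 = ((psiEq m).symm i).1 := by
    intro i
    have h := hf i
    have h2 : (⟨colorVal m (f i).2.1, hne _ (f i).2.2⟩ : {g : Gp m // g ≠ 0})
        = (psiEq m).symm i := by
      apply (psiEq m).injective
      rw [Equiv.apply_symm_apply]
      exact h
    exact congrArg Subtype.val h2
  have hpairdisj : ∀ i j, i ≠ j → (f i).1 = (f j).1 → Disjoint (f i).2.1 (f j).2.1 := by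
    intro i j hij hb
    rw [Finset.disjoint_left]
    intro x hxi hxj
    have h1 : ((f i).1, x) ∈ twoCompleteGraphs m (f i) := (mem_tcg m _ _ _).mpr ⟨rfl, hxi⟩
    have h2 : ((f i).1, x) ∈ twoCompleteGraphs m (f j) := (mem_tcg m _ _ _).mpr ⟨hb, hxj⟩
    exact Finset.disjoint_left.mp (hdisj i j hij) h1 h2
  set S : Bool → Finset (Fin (2 ^ m - 1)) :=
    fun b => Finset.univ.filter (fun i => (f i).1 = b) with hS
  set T : Bool → Finset (Fin (2 ^ m)) := fun b => (S b).biUnion (fun i => (f i).2.1) with hT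
  have hSd : ∀ b, ∀ i ∈ S b, ∀ j ∈ S b, i ≠ j → Disjoint ((f i).2.1) ((f j).2.1) := by
    intro b i hi j hj hij
    exact hpairdisj i j hij
      (((Finset.mem_filter.mp hi).2).trans ((Finset.mem_filter.mp hj).2).symm)
  have hTcard : ∀ b, (T b).card = 2 * (S b).card := by
    intro b
    rw [hT]
    rw [Finset.card_biUnion (hSd b), Finset.sum_congr rfl (fun i _ => (f i).2.2),
      Finset.sum_const, smul_eq_mul, mul_comm]
  have hTsum : ∀ b, ∑ v ∈ T b, phiEq m v = ∑ i ∈ S b, ((psiEq m).symm i).1 := by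
    intro b
    rw [hT, Finset.sum_biUnion (fun i hi j hj hij =>
      hSd b i (Finset.mem_coe.mp hi) j (Finset.mem_coe.mp hj) hij)]
    exact Finset.sum_congr rfl (fun i _ => hDf i)
  have hsumDtot : ∑ i : Fin (2 ^ m - 1), ((psiEq m).symm i).1 = 0 := by
    rw [← Equiv.sum_comp (psiEq m) (fun i => (((psiEq m).symm i).1 : Gp m))]
    simp only [Equiv.symm_apply_apply]
    have h1 : ∑ x : {g : Gp m // g ≠ 0}, (x : Gp m)
        = ∑ g ∈ Finset.univ.filter (fun g : Gp m => g ≠ 0), g :=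
      (Finset.sum_subtype (Finset.univ.filter (fun g : Gp m => g ≠ 0))
        (p := fun g : Gp m => g ≠ 0) (fun x => by simp) (fun g => g)).symm
    rw [h1, Finset.sum_filter_of_ne (fun x _ h => h)]
    exact Gp.sum_univ m hm
  have hSnot : ∀ b, S (!b) = Finset.univ.filter (fun i => ¬ ((f i).1 = b)) := by
    intro b
    rw [hS]
    apply Finset.filter_congr
    intro i _
    cases b <;> simp
  have hSpart : ∀ b, (S b).card + (S (!b)).card = 2 ^ m - 1 := by
    intro b
    rw [hSnot b]
    show (Finset.univ.filter (fun i => (f i).1 = b)).card + _ = _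
    rw [Finset.card_filter_add_card_filter_not, Finset.card_univ, Fintype.card_fin]
  have hSsum : ∀ b, (∑ i ∈ S b, ((psiEq m).symm i).1)
      + (∑ i ∈ S (!b), ((psiEq m).symm i).1) = 0 := by
    intro b
    rw [hSnot b]
    show (∑ i ∈ Finset.univ.filter (fun i => (f i).1 = b), ((psiEq m).symm i).1) + _ = _
    rw [Finset.sum_filter_add_sum_filter_not, hsumDtot]
  have hTle : ∀ b, (T b).card ≤ 2 ^ m := by
    intro b
    calc (T b).card ≤ (Finset.univ : Finset (Fin (2 ^ m))).card := Finset.card_le_univ _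
    _ = 2 ^ m := by rw [Finset.card_univ, Fintype.card_fin]
  obtain ⟨P, hP⟩ : ∃ P, 2 ^ (m - 1) = P := ⟨_, rfl⟩
  have hp : 2 ^ m = 2 * P := by
    rw [← hP, ← pow_succ']
    congr 1
    omega
  have key : ∃ b, (S b).card = P := by
    have h1 : (S false).card + (S true).card = 2 * P - 1 := by
      rw [← hp]; simpa using hSpart false
    have h2 : 2 * (S false).card ≤ 2 * P := by
      rw [← hp, ← hTcard false]; exact hTle false
    have h3 : 2 * (S true).card ≤ 2 * P := by
      rw [← hp, ← hTcard true]; exact hTle true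
    by_cases h : (S false).card = P
    · exact ⟨false, h⟩
    · exact ⟨true, by omega⟩
  obtain ⟨b, hb⟩ := key
  have hTb : T b = Finset.univ := by
    apply Finset.eq_univ_of_card
    rw [hTcard b, hb, Fintype.card_fin, hp]
  have hsum1 : ∑ i ∈ S b, ((psiEq m).symm i).1 = 0 := by
    rw [← hTsum b, hTb]
    rw [show ∑ v : Fin (2 ^ m), phiEq m v = ∑ g : Gp m, g from
      Fintype.sum_equiv (phiEq m) _ _ (fun v => rfl)]
    exact Gp.sum_univ m hm
  have hsum2 : ∑ i ∈ S (!b), ((psiEq m).symm i).1 = 0 := by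
    have h := hSsum b
    rw [hsum1, zero_add] at h
    exact h
  have hScard2 : (S (!b)).card = P - 1 := by
    have h1 : (S b).card + (S (!b)).card = 2 * P - 1 := by
      rw [← hp]; exact hSpart b
    omega
  have hTbc : (Finset.univ \ T (!b)).card = 2 := by
    rw [Finset.card_sdiff_of_subset (Finset.subset_univ _), Finset.card_univ, Fintype.card_fin,
      hTcard, hScard2, hp]
    have hP2 : 1 ≤ P := by
      have : 1 ≤ 2 ^ (m - 1) := Nat.one_le_two_pow
      omega
    omega
  have hsumU : ∑ v ∈ Finset.univ \ T (!b), phiEq m v = 0 := by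
    have h1 : (∑ v ∈ Finset.univ \ T (!b), phiEq m v) + ∑ v ∈ T (!b), phiEq m v
        = ∑ v : Fin (2 ^ m), phiEq m v := Finset.sum_sdiff (Finset.subset_univ _)
    rw [hTsum, hsum2, add_zero] at h1
    rw [h1, show ∑ v : Fin (2 ^ m), phiEq m v = ∑ g : Gp m, g from
      Fintype.sum_equiv (phiEq m) _ _ (fun v => rfl)]
    exact Gp.sum_univ m hm
  obtain ⟨u, w, huw, hU⟩ := Finset.card_eq_two.mp hTbc
  rw [hU, Finset.sum_pair huw] at hsumU
  exact huw ((phiEq m).injective (Gp.eq_of_add_eq_zero m hsumU))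
end
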